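/- arXiv:0801.3878 — 9 statements merged into one kernel-verified Lean document; each statement's English description precedes it below -/
import Mathlib

section
/- Let U be a finite set, A a finite set of functions A: U^n → V, and p_A a probability distribution on A. Suppose (A, p_A) satisfies the hash inequality: for all subsets T, T' of U^n, the sum over u∈T, u'∈T' of p_A({A : Au = Au'}) is at most |T∩T'| + |T||T'|α/|Im A| + min{|T|,|T'|}β, where Im A is the union over A∈A of the images of A. Then for any subset G of U^n and any u ∈ U^n, the probability p_A({A : there exists u' ∈ G \ {u} with Au' = Au}) ≤ |G|α/|Im A| + β. -/
open scoped Classical BigOperators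

/-- Collision-resistant property derived from the (α,β)-hash inequality
    (Lemma 1 of the paper). -/
theorem hash_collision_resistant
    {U V : Type} [Fintype U] [Fintype V] [DecidableEq V]
    (n : ℕ) (𝒜 : Finset ((Fin n → U) → V)) (p : ((Fin n → U) → V) → ℝ)
    (hp0 : ∀ A, 0 ≤ p A) (hp1 : ∑ A ∈ 𝒜, p A = 1)
    (α β : ℝ) (hα : 0 ≤ α) (hβ : 0 ≤ β)
    (Im : Finset V)
    (hIm : Im = 𝒜.biUnion (fun A => Finset.image A Finset.univ))
    (hhash : ∀ T T' : Finset (Fin n → U),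
      (∑ u ∈ T, ∑ u' ∈ T',
        ∑ A ∈ 𝒜.filter (fun A => A u = A u'), p A)
      ≤ ((T ∩ T').card : ℝ) + (T.card : ℝ) * (T'.card : ℝ) * α / (Im.card : ℝ)
        + (min T.card T'.card : ℝ) * β) :
    ∀ (G : Finset (Fin n → U)) (u : Fin n → U),
      (∑ A ∈ 𝒜.filter (fun A => ∃ u' ∈ G \ {u}, A u' = A u), p A)
      ≤ (G.card : ℝ) * α / (Im.card : ℝ) + β := by
  intro G u
  set T : Finset (Fin n → U) := G \ {u} with hT
  have key := hhash T {u}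
  have h1 : (∑ A ∈ 𝒜.filter (fun A => ∃ u' ∈ T, A u' = A u), p A)
      ≤ ∑ v ∈ T, ∑ u' ∈ ({u} : Finset (Fin n → U)),
          ∑ A ∈ 𝒜.filter (fun A => A v = A u'), p A := by
    simp only [Finset.sum_singleton]
    rw [Finset.sum_filter]
    have : ∀ v ∈ T, (∑ A ∈ 𝒜.filter (fun A => A v = A u), p A)
        = ∑ A ∈ 𝒜, if A v = A u then p A else 0 := fun v _ => Finset.sum_filter _ _
    rw [Finset.sum_congr rfl this, Finset.sum_comm]
    apply Finset.sum_le_sum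
    intro A hA
    by_cases h : ∃ u' ∈ T, A u' = A u
    · rw [if_pos h]
      obtain ⟨v₀, hv₀, hEq⟩ := h
      calc p A = (if A v₀ = A u then p A else 0) := by simp [hEq]
        _ ≤ ∑ v ∈ T, if A v = A u then p A else 0 := by
            apply Finset.single_le_sum (f := fun v => if A v = A u then p A else 0)
              (fun v _ => by by_cases hc : A v = A u <;> simp [hc, hp0 A]) hv₀
    · rw [if_neg h]
      exact Finset.sum_nonneg fun v _ => by by_cases hc : A v = A u <;> simp [hc, hp0 A]
  have hu : u ∉ T := by simp [hT]
  have hcap : (T ∩ {u} : Finset (Fin n → U)) = ∅ := by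
    ext x; simp [hT]
  have hdiv : 0 ≤ α / (Im.card : ℝ) := div_nonneg hα (Nat.cast_nonneg _)
  have hTcard : (T.card : ℝ) ≤ (G.card : ℝ) := by
    exact_mod_cast Finset.card_le_card (Finset.sdiff_subset)
  calc (∑ A ∈ 𝒜.filter (fun A => ∃ u' ∈ T, A u' = A u), p A)
      ≤ ∑ v ∈ T, ∑ u' ∈ ({u} : Finset (Fin n → U)),
          ∑ A ∈ 𝒜.filter (fun A => A v = A u'), p A := h1
    _ ≤ ((T ∩ {u}).card : ℝ) + (T.card : ℝ) * (({u} : Finset (Fin n → U)).card : ℝ) * α / (Im.card : ℝ)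
        + (min T.card ({u} : Finset (Fin n → U)).card : ℝ) * β := key
    _ ≤ (G.card : ℝ) * α / (Im.card : ℝ) + β := by
        rw [hcap]
        simp only [Finset.card_empty, Finset.card_singleton, Nat.cast_zero, Nat.cast_one,
          mul_one, zero_add]
        have h2 : (T.card : ℝ) * α / (Im.card : ℝ) ≤ (G.card : ℝ) * α / (Im.card : ℝ) := by
          rw [mul_div_assoc, mul_div_assoc]
          exact mul_le_mul_of_nonneg_right hTcard hdiv
        have h3 : min (T.card : ℝ) 1 * β ≤ β := by
          have := mul_le_mul_of_nonneg_right (min_le_right (T.card : ℝ) 1) hβ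
          linarith
        linarith
end

section
/- Let (A, p_A) satisfy the (α,β)-hash inequality and let p_C be uniform on Im A, independent of A. Then for any nonempty subset T ⊆ U^n, the probability p_{AC}({(A,c) : T ∩ C_A(c) = ∅}) ≤ α − 1 + |Im A|(β+1)/|T|, where C_A(c) = {u : Au = c}. -/
open scoped Classical BigOperators

set_option maxHeartbeats 1000000 in
/-- Saturating property (Lemma 2 of the paper): if (𝒜,p) satisfies the
    (α,β)-hash inequality and c is uniform on Im 𝒜 independent of A, then
    for any nonempty T ⊆ U^n the probability that T ∩ C_A(c) = ∅ is at most
    α − 1 + |Im 𝒜|(β+1)/|T|. -/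
theorem hash_saturating
    {U V : Type} [Fintype U] [Fintype V] [DecidableEq V]
    (n : ℕ) (𝒜 : Finset ((Fin n → U) → V)) (p : ((Fin n → U) → V) → ℝ)
    (hp0 : ∀ A, 0 ≤ p A) (hp1 : ∑ A ∈ 𝒜, p A = 1)
    (α β : ℝ) (hα : 1 ≤ α) (hβ : 0 ≤ β)
    (Im : Finset V)
    (hIm : Im = 𝒜.biUnion (fun A => Finset.image A Finset.univ))
    (hhash : ∀ T T' : Finset (Fin n → U),
      (∑ u ∈ T, ∑ u' ∈ T',
        ∑ A ∈ 𝒜.filter (fun A => A u = A u'), p A)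
      ≤ ((T ∩ T').card : ℝ) + (T.card : ℝ) * (T'.card : ℝ) * α / (Im.card : ℝ)
        + (min T.card T'.card : ℝ) * β) :
    ∀ T : Finset (Fin n → U), T.Nonempty →
      (∑ A ∈ 𝒜, ∑ c ∈ Im, p A * (1 / (Im.card : ℝ)) *
          (if T.filter (fun u => A u = c) = ∅ then 1 else 0))
      ≤ α - 1 + (Im.card : ℝ) * (β + 1) / (T.card : ℝ) := by
  intro T hT
  classical
  have h𝒜ne : 𝒜.Nonempty := by
    rcases Finset.eq_empty_or_nonempty 𝒜 with h | h
    · rw [h] at hp1; simp at hp1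
    · exact h
  obtain ⟨A0, hA0⟩ := h𝒜ne
  obtain ⟨u0, hu0⟩ := hT
  have hmem : ∀ A ∈ 𝒜, ∀ u : Fin n → U, A u ∈ Im := by
    intro A hA u
    rw [hIm]
    exact Finset.mem_biUnion.mpr ⟨A, hA, Finset.mem_image_of_mem _ (Finset.mem_univ u)⟩
  have hImne : Im.Nonempty := ⟨A0 u0, hmem A0 hA0 u0⟩
  set m : ℝ := (Im.card : ℝ) with hmdef
  set t : ℝ := (T.card : ℝ) with htdef
  have hm : 0 < m := by rw [hmdef]; exact_mod_cast Finset.card_pos.mpr hImne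
  have ht : 0 < t := by rw [htdef]; exact_mod_cast Finset.card_pos.mpr ⟨u0, hu0⟩
  set w : ((Fin n → U) → V) × V → ℝ := fun z => p z.1 * (1 / m) with hw
  set X : ((Fin n → U) → V) × V → ℝ :=
    fun z => ((T.filter fun u => z.1 u = z.2).card : ℝ) with hX
  set ind : ((Fin n → U) → V) × V → ℝ :=
    fun z => if (T.filter fun u => z.1 u = z.2) = ∅ then 0 else 1 with hind
  have hw0 : ∀ z, 0 ≤ w z := fun z => mul_nonneg (hp0 z.1) (by positivity)
  have hfib : ∀ A ∈ 𝒜, ∑ c ∈ Im, ((T.filter fun u => A u = c).card : ℝ) = t := by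
    intro A hA
    rw [htdef]
    norm_cast
    exact (Finset.card_eq_sum_card_fiberwise (fun x _ => hmem A hA x)).symm
  -- first moment
  have hS1 : ∑ z ∈ 𝒜 ×ˢ Im, w z * X z = t / m := by
    rw [Finset.sum_product]
    have h1 : ∀ A ∈ 𝒜, ∑ c ∈ Im, w (A, c) * X (A, c) = p A * (t / m) := by
      intro A hA
      simp only [hw, hX]
      rw [← Finset.mul_sum, hfib A hA]
      ring
    rw [Finset.sum_congr rfl h1, ← Finset.sum_mul, hp1, one_mul]
  -- total mass
  have hTot : ∑ z ∈ 𝒜 ×ˢ Im, w z = 1 := by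
    rw [Finset.sum_product]
    have h1 : ∀ A ∈ 𝒜, ∑ _c ∈ Im, w (A, _c) = p A := by
      intro A hA
      simp only [hw]
      rw [Finset.sum_const, nsmul_eq_mul, ← hmdef]
      field_simp
    rw [Finset.sum_congr rfl h1, hp1]
  -- second moment bound
  have hS2 : ∑ z ∈ 𝒜 ×ˢ Im, w z * X z ^ 2 ≤ (t + t * t * α / m + t * β) / m := by
    have key : ∀ A ∈ 𝒜, ∑ c ∈ Im, X (A, c) ^ 2
        = ∑ u ∈ T, ∑ u' ∈ T, (if A u = A u' then (1 : ℝ) else 0) := by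
      intro A hA
      have hcard : ∀ c, X (A, c) = ∑ u ∈ T, (if A u = c then (1 : ℝ) else 0) := by
        intro c
        simp only [hX]
        rw [Finset.card_filter]
        push_cast
        rfl
      calc ∑ c ∈ Im, X (A, c) ^ 2
          = ∑ c ∈ Im, ∑ u ∈ T, ∑ u' ∈ T,
              (if A u = c then (1 : ℝ) else 0) * (if A u' = c then 1 else 0) := by
            refine Finset.sum_congr rfl fun c _ => ?_
            rw [hcard c, sq, Finset.sum_mul_sum]
        _ = ∑ u ∈ T, ∑ u' ∈ T, ∑ c ∈ Im,
              (if A u = c then (1 : ℝ) else 0) * (if A u' = c then 1 else 0) := by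
            rw [Finset.sum_comm]
            exact Finset.sum_congr rfl fun u _ => Finset.sum_comm
        _ = ∑ u ∈ T, ∑ u' ∈ T, (if A u = A u' then (1 : ℝ) else 0) := by
            refine Finset.sum_congr rfl fun u _ => Finset.sum_congr rfl fun u' _ => ?_
            by_cases h : A u = A u'
            · rw [if_pos h, h]
              have hterm : ∀ c ∈ Im,
                  (if A u' = c then (1:ℝ) else 0) * (if A u' = c then 1 else 0)
                  = if A u' = c then 1 else 0 := fun c _ => by split <;> norm_num
              rw [Finset.sum_congr rfl hterm,
                Finset.sum_ite_eq Im (A u') (fun _ => (1:ℝ)), if_pos (hmem A hA u')]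
            · rw [if_neg h]
              refine Finset.sum_eq_zero fun c _ => ?_
              by_cases h1 : A u = c
              · rw [if_pos h1, if_neg (fun h2 => h (h1.trans h2.symm)), mul_zero]
              · rw [if_neg h1, zero_mul]
    have main : ∑ z ∈ 𝒜 ×ˢ Im, w z * X z ^ 2
        = (1 / m) * ∑ A ∈ 𝒜, p A *
            ∑ u ∈ T, ∑ u' ∈ T, (if A u = A u' then (1 : ℝ) else 0) := by
      rw [Finset.sum_product, Finset.mul_sum]
      refine Finset.sum_congr rfl fun A hA => ?_
      rw [← key A hA, Finset.mul_sum, Finset.mul_sum]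
      refine Finset.sum_congr rfl fun c _ => ?_
      simp only [hw]
      ring
    have swap : ∑ A ∈ 𝒜, p A * ∑ u ∈ T, ∑ u' ∈ T, (if A u = A u' then (1 : ℝ) else 0)
        = ∑ u ∈ T, ∑ u' ∈ T, ∑ A ∈ 𝒜.filter (fun A => A u = A u'), p A := by
      simp_rw [Finset.mul_sum, Finset.sum_filter, mul_ite, mul_one, mul_zero]
      rw [Finset.sum_comm]
      exact Finset.sum_congr rfl fun u _ => Finset.sum_comm
    rw [main, swap]
    have hb := hhash T T
    rw [Finset.inter_self, min_self] at hb
    have heq : ((T.card : ℝ)) + (T.card : ℝ) * (T.card : ℝ) * α / m + (T.card : ℝ) * β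
        = t + t * t * α / m + t * β := by rw [htdef]
    rw [heq] at hb
    have h1m : (0:ℝ) ≤ 1 / m := by positivity
    calc (1 / m) * ∑ u ∈ T, ∑ u' ∈ T, ∑ A ∈ 𝒜.filter (fun A => A u = A u'), p A
        ≤ (1 / m) * (t + t * t * α / m + t * β) := mul_le_mul_of_nonneg_left hb h1m
      _ = (t + t * t * α / m + t * β) / m := by ring
  -- the target quantity E
  set E : ℝ := ∑ A ∈ 𝒜, ∑ c ∈ Im, p A * (1 / m) *
      (if T.filter (fun u => A u = c) = ∅ then 1 else 0) with hE
  have hEprod : ∑ z ∈ 𝒜 ×ˢ Im, w z * ind z = 1 - E := by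
    have h1 : ∑ z ∈ 𝒜 ×ˢ Im, w z * ind z
        = ∑ z ∈ 𝒜 ×ˢ Im, (w z - w z *
            (if (T.filter fun u => z.1 u = z.2) = ∅ then 1 else 0)) := by
      refine Finset.sum_congr rfl fun z _ => ?_
      simp only [hind]
      by_cases h : (T.filter fun u => z.1 u = z.2) = ∅ <;> simp [h]
    rw [h1, Finset.sum_sub_distrib, hTot, hE, Finset.sum_product]
  have hE0 : 0 ≤ E := by
    rw [hE]
    refine Finset.sum_nonneg fun A _ => Finset.sum_nonneg fun c _ => ?_
    refine mul_nonneg (mul_nonneg (hp0 A) (by positivity)) ?_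
    split <;> norm_num
  clear_value m t E
  -- Cauchy–Schwarz
  have hCS := Finset.sum_mul_sq_le_sq_mul_sq (𝒜 ×ˢ Im)
    (fun z => Real.sqrt (w z) * ind z) (fun z => Real.sqrt (w z) * X z)
  have hfg : ∀ z ∈ 𝒜 ×ˢ Im,
      (Real.sqrt (w z) * ind z) * (Real.sqrt (w z) * X z) = w z * X z := by
    intro z _
    have hs : Real.sqrt (w z) * Real.sqrt (w z) = w z := Real.mul_self_sqrt (hw0 z)
    by_cases h : (T.filter fun u => z.1 u = z.2) = ∅
    · have hx0 : X z = 0 := by simp [hX, h]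
      rw [hx0, mul_zero, mul_zero, mul_zero]
    · have hi : ind z = 1 := by simp only [hind]; rw [if_neg h]
      rw [hi, mul_one, ← mul_assoc, hs]
  have hf2 : ∀ z ∈ 𝒜 ×ˢ Im, (Real.sqrt (w z) * ind z) ^ 2 = w z * ind z := by
    intro z _
    have hs : Real.sqrt (w z) ^ 2 = w z := Real.sq_sqrt (hw0 z)
    have hi : ind z ^ 2 = ind z := by
      simp only [hind]; split <;> ring
    rw [mul_pow, hs, hi]
  have hg2 : ∀ z ∈ 𝒜 ×ˢ Im, (Real.sqrt (w z) * X z) ^ 2 = w z * X z ^ 2 := by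
    intro z _
    have hs : Real.sqrt (w z) ^ 2 = w z := Real.sq_sqrt (hw0 z)
    rw [mul_pow, hs]
  rw [Finset.sum_congr rfl hfg, Finset.sum_congr rfl hf2, Finset.sum_congr rfl hg2,
    hS1, hEprod] at hCS
  set D : ℝ := m * (1 + β) + t * α with hD
  clear_value D
  have hB : (t + t * t * α / m + t * β) / m = t * D / (m * m) := by
    rw [hD]; field_simp; ring
  have h1E : 0 ≤ 1 - E := by
    rw [← hEprod]
    refine Finset.sum_nonneg fun z _ => mul_nonneg (hw0 z) ?_
    simp only [hind]; split <;> norm_num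
  have hCS2 : (t / m) ^ 2 ≤ (1 - E) * (t * D / (m * m)) := by
    calc (t / m) ^ 2 ≤ (1 - E) * ∑ z ∈ 𝒜 ×ˢ Im, w z * X z ^ 2 := hCS
      _ ≤ (1 - E) * (t * D / (m * m)) := by
          refine mul_le_mul_of_nonneg_left ?_ h1E
          rw [← hB]; exact hS2
  have hkey : E * D ≤ D - t := by
    have hmm : (0:ℝ) < m * m := by positivity
    have h1 : (t * t) / (m * m) ≤ ((1 - E) * t * D) / (m * m) := by
      calc t * t / (m * m) = (t / m) ^ 2 := by field_simp
        _ ≤ (1 - E) * (t * D / (m * m)) := hCS2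
        _ = ((1 - E) * t * D) / (m * m) := by ring
    have h2 : t * t ≤ (1 - E) * t * D := (div_le_div_iff_of_pos_right hmm).mp h1
    nlinarith [h2, ht]
  have htD : t ≤ D := by rw [hD]; nlinarith [hm, ht]
  have hfinal : E ≤ α - 1 + m * (β + 1) / t := by
    have hrhs : α - 1 + m * (β + 1) / t = (D - t) / t := by
      rw [hD]; field_simp; ring
    rw [hrhs, le_div_iff₀ ht]
    nlinarith [hkey, mul_nonneg hE0 (by linarith : (0:ℝ) ≤ D - t)]
  exact hfinal
end

section
/- Under the (α,β)-hash inequality for (A,p_A) with p_C uniform on Im A independent of A, for any nonempty subset T ⊆ U^n, the second moment bound holds: E_{A,C}[(Σ_{u∈T} 1[Au = C] − |T|/|Im A|)^2] ≤ |T|^2(α−1)/|Im A|^2 + |T|(β+1)/|Im A|. -/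
open scoped Classical BigOperators

/-- Second-moment bound used in the proof of the saturating property
    (Eq. (25) of the paper): under the (α,β)-hash inequality, with C uniform
    on Im 𝒜 and independent of A,
    E[(Σ_{u∈T} 1[Au = C] − |T|/|Im 𝒜|)²] ≤ |T|²(α−1)/|Im 𝒜|² + |T|(β+1)/|Im 𝒜|. -/
theorem hash_second_moment
    {U V : Type} [Fintype U] [Fintype V] [DecidableEq V]
    (n : ℕ) (𝒜 : Finset ((Fin n → U) → V)) (p : ((Fin n → U) → V) → ℝ)
    (hp0 : ∀ A, 0 ≤ p A) (hp1 : ∑ A ∈ 𝒜, p A = 1)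
    (α β : ℝ) (hα : 1 ≤ α) (hβ : 0 ≤ β)
    (Im : Finset V)
    (hIm : Im = 𝒜.biUnion (fun A => Finset.image A Finset.univ))
    (hhash : ∀ T T' : Finset (Fin n → U),
      (∑ u ∈ T, ∑ u' ∈ T',
        ∑ A ∈ 𝒜.filter (fun A => A u = A u'), p A)
      ≤ ((T ∩ T').card : ℝ) + (T.card : ℝ) * (T'.card : ℝ) * α / (Im.card : ℝ)
        + (min T.card T'.card : ℝ) * β) :
    ∀ T : Finset (Fin n → U), T.Nonempty →
      (∑ A ∈ 𝒜, ∑ c ∈ Im, p A * (1 / (Im.card : ℝ)) *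
          ((∑ u ∈ T, (if A u = c then (1 : ℝ) else 0))
            - (T.card : ℝ) / (Im.card : ℝ)) ^ 2)
      ≤ (T.card : ℝ) ^ 2 * (α - 1) / (Im.card : ℝ) ^ 2
        + (T.card : ℝ) * (β + 1) / (Im.card : ℝ) := by
  intro T hT
  obtain ⟨u0, hu0⟩ := hT
  have hAne : 𝒜.Nonempty := by
    by_contra h
    rw [Finset.not_nonempty_iff_eq_empty] at h
    simp [h] at hp1
  obtain ⟨A0, hA0⟩ := hAne
  have hmemIm : ∀ A ∈ 𝒜, ∀ u : Fin n → U, A u ∈ Im := by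
    intro A hA u
    rw [hIm]
    exact Finset.mem_biUnion.2 ⟨A, hA, Finset.mem_image.2 ⟨u, Finset.mem_univ _, rfl⟩⟩
  have hm0 : (0:ℝ) < (Im.card : ℝ) := by
    have : Im.Nonempty := ⟨A0 u0, hmemIm A0 hA0 u0⟩
    exact_mod_cast Finset.card_pos.2 this
  set t : ℝ := (T.card : ℝ) with ht
  set m : ℝ := (Im.card : ℝ) with hmdef
  have hmne : m ≠ 0 := ne_of_gt hm0
  -- indicator product lemma
  have hind : ∀ A ∈ 𝒜, ∀ u u' : Fin n → U,
      ∑ c ∈ Im, (if A u = c then (1:ℝ) else 0) * (if A u' = c then (1:ℝ) else 0)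
        = if A u = A u' then 1 else 0 := by
    intro A hA u u'
    simp only [ite_mul, one_mul, zero_mul]
    rw [Finset.sum_ite_eq]
    by_cases h : A u = A u'
    · simp [h, hmemIm A hA u']
    · simp [hmemIm A hA u, h, Ne.symm h]
  have hsum1 : ∀ A ∈ 𝒜, ∀ u : Fin n → U,
      ∑ c ∈ Im, (if A u = c then (1:ℝ) else 0) = 1 := by
    intro A hA u
    rw [Finset.sum_ite_eq]
    simp [hmemIm A hA u]
  -- per-A identity
  have key : ∀ A ∈ 𝒜,
      ∑ c ∈ Im, ((∑ u ∈ T, if A u = c then (1:ℝ) else 0) - t/m)^2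
        = (∑ u ∈ T, ∑ u' ∈ T, if A u = A u' then (1:ℝ) else 0) - t^2/m := by
    intro A hA
    have e1 : ∑ c ∈ Im, (∑ u ∈ T, if A u = c then (1:ℝ) else 0)^2
        = ∑ u ∈ T, ∑ u' ∈ T, if A u = A u' then (1:ℝ) else 0 := by
      have h1 : ∀ c ∈ Im, (∑ u ∈ T, if A u = c then (1:ℝ) else 0)^2
          = ∑ u ∈ T, ∑ u' ∈ T,
              (if A u = c then (1:ℝ) else 0) * (if A u' = c then (1:ℝ) else 0) := by
        intro c _
        rw [sq, Finset.sum_mul_sum]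
      rw [Finset.sum_congr rfl h1, Finset.sum_comm]
      refine Finset.sum_congr rfl fun u _ => ?_
      rw [Finset.sum_comm]
      exact Finset.sum_congr rfl fun u' _ => hind A hA u u'
    have e2 : ∑ c ∈ Im, (∑ u ∈ T, if A u = c then (1:ℝ) else 0) = t := by
      rw [Finset.sum_comm]
      rw [Finset.sum_congr rfl fun u hu => hsum1 A hA u]
      simp [ht]
    have expand : ∀ c ∈ Im, ((∑ u ∈ T, if A u = c then (1:ℝ) else 0) - t/m)^2
        = (∑ u ∈ T, if A u = c then (1:ℝ) else 0)^2
          - 2*(t/m)*(∑ u ∈ T, if A u = c then (1:ℝ) else 0) + (t/m)^2 := by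
      intro c _; ring
    rw [Finset.sum_congr rfl expand]
    rw [Finset.sum_add_distrib, Finset.sum_sub_distrib, ← Finset.mul_sum,
      Finset.sum_const, nsmul_eq_mul, e1, e2, ← hmdef]
    field_simp
    ring
  -- rewrite LHS
  have step1 : ∀ A ∈ 𝒜,
      ∑ c ∈ Im, p A * (1/m) *
        ((∑ u ∈ T, if A u = c then (1:ℝ) else 0) - t/m)^2
      = (1/m) * (p A * (∑ u ∈ T, ∑ u' ∈ T, if A u = A u' then (1:ℝ) else 0))
        - (t^2/m^2) * p A := by
    intro A hA
    rw [← Finset.mul_sum, key A hA]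
    field_simp
  rw [Finset.sum_congr rfl step1, Finset.sum_sub_distrib, ← Finset.mul_sum,
    ← Finset.mul_sum, hp1, mul_one]
  -- swap sums in the collision term
  have swap : ∑ A ∈ 𝒜, p A * (∑ u ∈ T, ∑ u' ∈ T, if A u = A u' then (1:ℝ) else 0)
      = ∑ u ∈ T, ∑ u' ∈ T, ∑ A ∈ 𝒜.filter (fun A => A u = A u'), p A := by
    simp_rw [Finset.mul_sum]
    rw [Finset.sum_comm]
    refine Finset.sum_congr rfl fun u _ => ?_
    rw [Finset.sum_comm]
    refine Finset.sum_congr rfl fun u' _ => ?_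
    rw [Finset.sum_filter]
    exact Finset.sum_congr rfl fun A _ => by by_cases h : A u = A u' <;> simp [h]
  rw [swap]
  have hb := hhash T T
  rw [Finset.inter_self, min_self] at hb
  have hbound : (1:ℝ)/m * (∑ u ∈ T, ∑ u' ∈ T, ∑ A ∈ 𝒜.filter (fun A => A u = A u'), p A)
      ≤ (1/m) * (t + t * t * α / m + t * β) := by
    apply mul_le_mul_of_nonneg_left _ (by positivity)
    exact hb
  have heq : (1/m) * (t + t * t * α / m + t * β) - t^2/m^2
      = t^2 * (α - 1) / m^2 + t * (β + 1) / m := by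
    field_simp
    ring
  rw [← heq]
  linarith [hbound]
end

section
/- Let (A, p_A) satisfy the (α_A, β_A)-hash inequality, p_C uniform on Im A independent of A. Then for any subset G ⊆ U^n and any u ∉ G, the probability p_{AC}({(A,c) : G ∩ C_A(c) ≠ ∅ and Au = c}) ≤ |G|α_A/|Im A|^2 + β_A/|Im A|. -/
open scoped Classical BigOperators

/-- Lemma 3 of the paper: under the (α_A,β_A)-hash inequality, with c uniform
    on Im 𝒜 independent of A, for any G ⊆ U^n and u ∉ G,
    P_{A,c}(G ∩ C_A(c) ≠ ∅ and u ∈ C_A(c)) ≤ |G|α_A/|Im 𝒜|² + β_A/|Im 𝒜|. -/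
theorem hash_coset_hit
    {U V : Type} [Fintype U] [Fintype V] [DecidableEq V]
    (n : ℕ) (𝒜 : Finset ((Fin n → U) → V)) (p : ((Fin n → U) → V) → ℝ)
    (hp0 : ∀ A, 0 ≤ p A) (hp1 : ∑ A ∈ 𝒜, p A = 1)
    (α β : ℝ) (hα : 0 ≤ α) (hβ : 0 ≤ β)
    (Im : Finset V)
    (hIm : Im = 𝒜.biUnion (fun A => Finset.image A Finset.univ))
    (hhash : ∀ T T' : Finset (Fin n → U),
      (∑ u ∈ T, ∑ u' ∈ T',
        ∑ A ∈ 𝒜.filter (fun A => A u = A u'), p A)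
      ≤ ((T ∩ T').card : ℝ) + (T.card : ℝ) * (T'.card : ℝ) * α / (Im.card : ℝ)
        + (min T.card T'.card : ℝ) * β) :
    ∀ (G : Finset (Fin n → U)) (u : Fin n → U), u ∉ G →
      (∑ A ∈ 𝒜, ∑ c ∈ Im, p A * (1 / (Im.card : ℝ)) *
          (if (G.filter (fun u' => A u' = c)).Nonempty ∧ A u = c then 1 else 0))
      ≤ (G.card : ℝ) * α / (Im.card : ℝ) ^ 2 + β / (Im.card : ℝ) := by
  intro G u hu
  by_cases hm0 : Im.card = 0
  · rw [Finset.card_eq_zero] at hm0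
    simp [hm0]
  have hmpos : (0:ℝ) < (Im.card : ℝ) := by positivity
  set m : ℝ := (Im.card : ℝ) with hm
  have hmne : m ≠ 0 := ne_of_gt hmpos
  -- Step 1: collapse the inner sum over c
  have step1 : ∀ A ∈ 𝒜,
      (∑ c ∈ Im, p A * (1 / m) *
        (if (G.filter (fun u' => A u' = c)).Nonempty ∧ A u = c then 1 else 0))
      = p A * (1 / m) *
        (if (G.filter (fun u' => A u' = A u)).Nonempty then 1 else 0) := by
    intro A hA
    have hAu : A u ∈ Im := by
      rw [hIm, Finset.mem_biUnion]
      exact ⟨A, hA, Finset.mem_image_of_mem A (Finset.mem_univ u)⟩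
    rw [Finset.sum_eq_single (A u)]
    · simp
    · intro c hc hne
      have : ¬ ((G.filter (fun u' => A u' = c)).Nonempty ∧ A u = c) := by
        rintro ⟨-, h⟩; exact hne h.symm
      simp [this]
    · intro h; exact absurd hAu h
  rw [Finset.sum_congr rfl step1]
  -- Step 2: bound indicator by sum over G
  have step2 : ∀ A : ((Fin n → U) → V),
      (if (G.filter (fun u' => A u' = A u)).Nonempty then (1:ℝ) else 0)
      ≤ ∑ u' ∈ G, (if A u = A u' then (1:ℝ) else 0) := by
    intro A
    have hcard : ∑ u' ∈ G, (if A u = A u' then (1:ℝ) else 0)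
        = ((G.filter (fun u' => A u' = A u)).card : ℝ) := by
      rw [Finset.card_filter]
      push_cast
      refine Finset.sum_congr rfl fun u' _ => ?_
      simp [eq_comm]
    rw [hcard]
    split
    · exact_mod_cast Finset.card_pos.mpr ‹_›
    · positivity
  have hmono : (∑ A ∈ 𝒜, p A * (1 / m) *
        (if (G.filter (fun u' => A u' = A u)).Nonempty then 1 else 0))
      ≤ ∑ A ∈ 𝒜, p A * (1 / m) * ∑ u' ∈ G, (if A u = A u' then (1:ℝ) else 0) := by
    refine Finset.sum_le_sum fun A _ => ?_
    have h1 : 0 ≤ p A * (1 / m) := mul_nonneg (hp0 A) (by positivity)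
    exact mul_le_mul_of_nonneg_left (step2 A) h1
  refine le_trans hmono ?_
  -- Step 3: rewrite as hash-inequality LHS
  have hrw : (∑ A ∈ 𝒜, p A * (1 / m) * ∑ u' ∈ G, (if A u = A u' then (1:ℝ) else 0))
      = (1 / m) * ∑ u' ∈ G, ∑ A ∈ 𝒜.filter (fun A => A u = A u'), p A := by
    simp_rw [Finset.mul_sum]
    rw [Finset.sum_comm]
    refine Finset.sum_congr rfl fun u' _ => ?_
    rw [Finset.sum_filter]
    refine Finset.sum_congr rfl fun A _ => ?_
    split <;> ring
  rw [hrw]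
  -- Step 4: apply hhash with T = {u}, T' = G
  have hh := hhash {u} G
  rw [Finset.sum_singleton] at hh
  have hinter : ({u} ∩ G : Finset (Fin n → U)) = ∅ :=
    Finset.singleton_inter_of_notMem hu
  rw [hinter] at hh
  simp only [Finset.card_empty, Finset.card_singleton, Nat.cast_zero, Nat.cast_one,
    one_mul, zero_add] at hh
  have hminle : min (1:ℝ) (G.card:ℝ) ≤ 1 := min_le_left _ _
  have hh2 : (∑ u' ∈ G, ∑ A ∈ 𝒜.filter (fun A => A u = A u'), p A)
      ≤ (G.card : ℝ) * α / m + β := by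
    refine le_trans hh ?_
    gcongr
    · calc min (1:ℝ) (G.card:ℝ) * β ≤ 1 * β :=
            mul_le_mul_of_nonneg_right hminle hβ
        _ = β := one_mul β
  calc (1 / m) * ∑ u' ∈ G, ∑ A ∈ 𝒜.filter (fun A => A u = A u'), p A
      ≤ (1 / m) * ((G.card : ℝ) * α / m + β) := by
        refine mul_le_mul_of_nonneg_left hh2 ?_
        positivity
    _ = (G.card : ℝ) * α / m ^ 2 + β / m := by field_simp
end

section
/- Let (A, p_A) and (B, p_B) be ensembles of functions on U^n with p_C uniform on Im A, all independent, where (B, p_B) satisfies the (α_B, β_B)-hash inequality. Suppose for each pair (A, c) a point u_{A,c} ∈ U^n is given. Then for any G ⊆ U^n, p_{ABC}({(A,B,c) : (G \ {u_{A,c}}) ∩ C_{AB}(c, B u_{A,c}) ≠ ∅}) ≤ |G| α_B / (|Im A| |Im B|) + β_B, where C_{AB}(c,b) := {u : Au = c and Bu = b}. -/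
open scoped Classical BigOperators

/-- Lemma 4 of the paper: two independent ensembles (𝒜,p_A) and (ℬ,p_B), c
    uniform on Im 𝒜; (ℬ,p_B) satisfies the (α_B,β_B)-hash inequality.  For a
    point u_{A,c} depending on (A,c),
    P_{A,B,c}((G \ {u_{A,c}}) ∩ C_{AB}(c, B u_{A,c}) ≠ ∅)
      ≤ |G| α_B / (|Im 𝒜| |Im ℬ|) + β_B. -/
theorem hash_joint_coset
    {U VA VB : Type} [Fintype U] [Fintype VA] [Fintype VB]
    [DecidableEq VA] [DecidableEq VB]
    (n : ℕ)
    (𝒜 : Finset ((Fin n → U) → VA)) (pA : ((Fin n → U) → VA) → ℝ)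
    (ℬ : Finset ((Fin n → U) → VB)) (pB : ((Fin n → U) → VB) → ℝ)
    (hpA0 : ∀ A, 0 ≤ pA A) (hpA1 : ∑ A ∈ 𝒜, pA A = 1)
    (hpB0 : ∀ B, 0 ≤ pB B) (hpB1 : ∑ B ∈ ℬ, pB B = 1)
    (αB βB : ℝ) (hαB : 0 ≤ αB) (hβB : 0 ≤ βB)
    (ImA : Finset VA) (ImB : Finset VB)
    (hImA : ImA = 𝒜.biUnion (fun A => Finset.image A Finset.univ))
    (hImB : ImB = ℬ.biUnion (fun B => Finset.image B Finset.univ))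
    (hhashB : ∀ T T' : Finset (Fin n → U),
      (∑ u ∈ T, ∑ u' ∈ T',
        ∑ B ∈ ℬ.filter (fun B => B u = B u'), pB B)
      ≤ ((T ∩ T').card : ℝ) + (T.card : ℝ) * (T'.card : ℝ) * αB / (ImB.card : ℝ)
        + (min T.card T'.card : ℝ) * βB)
    (usel : ((Fin n → U) → VA) → VA → (Fin n → U)) :
    ∀ G : Finset (Fin n → U),
      (∑ A ∈ 𝒜, ∑ B ∈ ℬ, ∑ c ∈ ImA,
        pA A * pB B * (1 / (ImA.card : ℝ)) *
          (if ∃ u' ∈ G \ {usel A c}, A u' = c ∧ B u' = B (usel A c)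
            then 1 else 0))
      ≤ (G.card : ℝ) * αB / ((ImA.card : ℝ) * (ImB.card : ℝ)) + βB := by
  intro G
  by_cases hA0 : ImA = ∅
  · simp only [hA0, Finset.sum_empty, Finset.card_empty, Nat.cast_zero]
    have : (0:ℝ) ≤ (G.card : ℝ) * αB / ((0:ℝ) * (ImB.card : ℝ)) + βB := by positivity
    simpa using this
  have hIpos : (0:ℝ) < (ImA.card : ℝ) := by
    have := Finset.card_pos.2 (Finset.nonempty_of_ne_empty hA0)
    exact_mod_cast this
  have hIne : (ImA.card : ℝ) ≠ 0 := ne_of_gt hIpos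
  -- key per (A,c) bound over B
  have key : ∀ (A : (Fin n → U) → VA) (c : VA),
      (∑ B ∈ ℬ, pB B *
        (if ∃ u' ∈ G \ {usel A c}, A u' = c ∧ B u' = B (usel A c) then 1 else 0))
      ≤ (((G \ {usel A c}).filter (fun u' => A u' = c)).card : ℝ) * αB / (ImB.card : ℝ)
        + βB := by
    intro A c
    set u₀ := usel A c with hu₀
    set T' := (G \ {u₀}).filter (fun u' => A u' = c) with hT'
    have h1 : ∀ B ∈ ℬ, pB B *
        (if ∃ u' ∈ G \ {u₀}, A u' = c ∧ B u' = B u₀ then 1 else 0)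
        ≤ ∑ u' ∈ T', (if B u₀ = B u' then pB B else 0) := by
      intro B hB
      split_ifs with h
      · obtain ⟨u', hu', hAc, hBeq⟩ := h
        have hmem : u' ∈ T' := Finset.mem_filter.2 ⟨hu', hAc⟩
        rw [mul_one]
        have hle := Finset.single_le_sum
          (f := fun u'' => if B u₀ = B u'' then pB B else 0)
          (fun x _ => by split_ifs; exacts [hpB0 B, le_refl 0]) hmem
        simpa [if_pos hBeq.symm] using hle
      · rw [mul_zero]
        exact Finset.sum_nonneg fun x _ => by
          split_ifs; exacts [hpB0 B, le_refl 0]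
    calc (∑ B ∈ ℬ, pB B *
          (if ∃ u' ∈ G \ {u₀}, A u' = c ∧ B u' = B u₀ then 1 else 0))
        ≤ ∑ B ∈ ℬ, ∑ u' ∈ T', (if B u₀ = B u' then pB B else 0) :=
          Finset.sum_le_sum h1
      _ = ∑ u' ∈ T', ∑ B ∈ ℬ.filter (fun B => B u₀ = B u'), pB B := by
          rw [Finset.sum_comm]
          exact Finset.sum_congr rfl fun u' _ => (Finset.sum_filter _ _).symm
      _ = ∑ u ∈ ({u₀} : Finset (Fin n → U)), ∑ u' ∈ T',
            ∑ B ∈ ℬ.filter (fun B => B u = B u'), pB B := by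
          rw [Finset.sum_singleton]
      _ ≤ ((({u₀} : Finset (Fin n → U)) ∩ T').card : ℝ)
            + (({u₀} : Finset (Fin n → U)).card : ℝ) * (T'.card : ℝ) * αB / (ImB.card : ℝ)
            + (min ({u₀} : Finset (Fin n → U)).card T'.card : ℝ) * βB := hhashB {u₀} T'
      _ ≤ (T'.card : ℝ) * αB / (ImB.card : ℝ) + βB := by
          have hnot : u₀ ∉ T' := by
            intro hmem
            have := (Finset.mem_sdiff.1 (Finset.mem_filter.1 hmem).1).2
            simp at this
          have hint : ({u₀} : Finset (Fin n → U)) ∩ T' = ∅ := by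
            apply Finset.eq_empty_of_forall_notMem
            intro x hx
            rcases Finset.mem_inter.1 hx with ⟨hx1, hx2⟩
            rw [Finset.mem_singleton.1 hx1] at hx2
            exact hnot hx2
          rw [hint]
          simp only [Finset.card_empty, Finset.card_singleton, Nat.cast_zero, Nat.cast_one,
            one_mul, zero_add]
          have : min (1:ℝ) (T'.card : ℝ) * βB ≤ 1 * βB :=
            mul_le_mul_of_nonneg_right (min_le_left _ _) hβB
          linarith
  -- per A bound, summing over c
  have step : ∀ A ∈ 𝒜,
      (∑ B ∈ ℬ, ∑ c ∈ ImA,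
        pA A * pB B * (1 / (ImA.card : ℝ)) *
          (if ∃ u' ∈ G \ {usel A c}, A u' = c ∧ B u' = B (usel A c) then 1 else 0))
      ≤ pA A * (1 / (ImA.card : ℝ)) *
          ((G.card : ℝ) * αB / (ImB.card : ℝ) + (ImA.card : ℝ) * βB) := by
    intro A hA
    have hre : (∑ B ∈ ℬ, ∑ c ∈ ImA,
        pA A * pB B * (1 / (ImA.card : ℝ)) *
          (if ∃ u' ∈ G \ {usel A c}, A u' = c ∧ B u' = B (usel A c) then 1 else 0))
        = pA A * (1 / (ImA.card : ℝ)) * (∑ c ∈ ImA, ∑ B ∈ ℬ, pB B *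
          (if ∃ u' ∈ G \ {usel A c}, A u' = c ∧ B u' = B (usel A c) then 1 else 0)) := by
      rw [Finset.sum_comm, Finset.mul_sum]
      refine Finset.sum_congr rfl fun c _ => ?_
      rw [Finset.mul_sum]
      exact Finset.sum_congr rfl fun B _ => by ring
    rw [hre]
    have hcards : (∑ c ∈ ImA,
        (((G \ {usel A c}).filter (fun u' => A u' = c)).card : ℝ)) ≤ (G.card : ℝ) := by
      have h1 : ∀ c ∈ ImA, (((G \ {usel A c}).filter (fun u' => A u' = c)).card : ℝ)
          ≤ ((G.filter (fun u' => A u' = c)).card : ℝ) := by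
        intro c _
        have : ((G \ {usel A c}).filter (fun u' => A u' = c))
            ⊆ G.filter (fun u' => A u' = c) :=
          Finset.filter_subset_filter _ (Finset.sdiff_subset)
        exact_mod_cast Finset.card_le_card this
      have h2 : (∑ c ∈ ImA, ((G.filter (fun u' => A u' = c)).card : ℝ))
          ≤ ∑ c ∈ (Finset.univ : Finset VA), ((G.filter (fun u' => A u' = c)).card : ℝ) :=
        Finset.sum_le_sum_of_subset_of_nonneg (Finset.subset_univ _)
          (fun c _ _ => by positivity)
      have h3 : (∑ c ∈ (Finset.univ : Finset VA),
          ((G.filter (fun u' => A u' = c)).card : ℝ)) = (G.card : ℝ) := by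
        have := Finset.card_eq_sum_card_fiberwise
          (f := A) (s := G) (t := (Finset.univ : Finset VA))
          (fun x _ => Finset.mem_univ _)
        rw [this]
        push_cast
        rfl
      calc (∑ c ∈ ImA, (((G \ {usel A c}).filter (fun u' => A u' = c)).card : ℝ))
          ≤ ∑ c ∈ ImA, ((G.filter (fun u' => A u' = c)).card : ℝ) := Finset.sum_le_sum h1
        _ ≤ _ := h2
        _ = (G.card : ℝ) := h3
    have hin : (∑ c ∈ ImA, ∑ B ∈ ℬ, pB B *
        (if ∃ u' ∈ G \ {usel A c}, A u' = c ∧ B u' = B (usel A c) then 1 else 0))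
        ≤ (G.card : ℝ) * αB / (ImB.card : ℝ) + (ImA.card : ℝ) * βB := by
      calc (∑ c ∈ ImA, ∑ B ∈ ℬ, pB B *
            (if ∃ u' ∈ G \ {usel A c}, A u' = c ∧ B u' = B (usel A c) then 1 else 0))
          ≤ ∑ c ∈ ImA,
            ((((G \ {usel A c}).filter (fun u' => A u' = c)).card : ℝ) * αB / (ImB.card : ℝ)
              + βB) := Finset.sum_le_sum fun c _ => key A c
        _ = (∑ c ∈ ImA, (((G \ {usel A c}).filter (fun u' => A u' = c)).card : ℝ))
              * αB / (ImB.card : ℝ) + (ImA.card : ℝ) * βB := by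
            rw [Finset.sum_add_distrib, Finset.sum_const, nsmul_eq_mul]
            rw [← Finset.sum_div, ← Finset.sum_mul]
        _ ≤ (G.card : ℝ) * αB / (ImB.card : ℝ) + (ImA.card : ℝ) * βB := by
            have : (∑ c ∈ ImA, (((G \ {usel A c}).filter (fun u' => A u' = c)).card : ℝ))
                * αB / (ImB.card : ℝ) ≤ (G.card : ℝ) * αB / (ImB.card : ℝ) := by
              rcases eq_or_lt_of_le (Nat.cast_nonneg ImB.card : (0:ℝ) ≤ _) with h | h
              · rw [← h]; simp
              · exact (div_le_div_iff_of_pos_right h).2 (mul_le_mul_of_nonneg_right hcards hαB)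
            linarith
    have hnn : 0 ≤ pA A * (1 / (ImA.card : ℝ)) := mul_nonneg (hpA0 A) (by positivity)
    exact mul_le_mul_of_nonneg_left hin hnn
  calc (∑ A ∈ 𝒜, ∑ B ∈ ℬ, ∑ c ∈ ImA,
        pA A * pB B * (1 / (ImA.card : ℝ)) *
          (if ∃ u' ∈ G \ {usel A c}, A u' = c ∧ B u' = B (usel A c) then 1 else 0))
      ≤ ∑ A ∈ 𝒜, pA A * (1 / (ImA.card : ℝ)) *
          ((G.card : ℝ) * αB / (ImB.card : ℝ) + (ImA.card : ℝ) * βB) :=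
        Finset.sum_le_sum step
    _ = (1 / (ImA.card : ℝ)) *
          ((G.card : ℝ) * αB / (ImB.card : ℝ) + (ImA.card : ℝ) * βB) := by
        rw [← Finset.sum_mul, ← Finset.sum_mul, hpA1, one_mul]
    _ = (G.card : ℝ) * αB / ((ImA.card : ℝ) * (ImB.card : ℝ)) + βB := by
        have h2 : (1 / (ImA.card : ℝ)) * ((ImA.card : ℝ) * βB) = βB := by
          field_simp
        rw [mul_add, h2, div_mul_eq_mul_div, one_mul, div_div, mul_comm (ImB.card : ℝ)]
end

section
/- Let (A, p_A) and (B, p_B) be ensembles of l_A×n and l_B×n matrices over a finite field F_q whose zero-pattern probabilities p_{A,t} := p_A({A: Au = 0}) depend only on the type t(u), with hash constants (α_A, β_A) and (α_B, β_B) defined via the average spectrum. Then the product ensemble of functions u ↦ (Au, Bu) from F_q^n to F_q^{l_A+l_B} satisfies the hash inequality with constants α_{AB} = α_A α_B and β_{AB} = min{β_A, β_B}. -/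
open scoped Classical BigOperators

/-- The type (count of occurrences of each symbol) of a vector. -/
def vecType {F : Type} [DecidableEq F] {n : ℕ} (u : Fin n → F) : F → ℕ :=
  fun a => (Finset.univ.filter (fun i => u i = a)).card

/-- Probability that a random matrix from the ensemble annihilates u. -/
noncomputable def pZero {F : Type} [Field F] [Fintype F] [DecidableEq F]
    {l n : ℕ} (𝒜 : Finset (Matrix (Fin l) (Fin n) F))
    (p : Matrix (Fin l) (Fin n) F → ℝ) (u : Fin n → F) : ℝ :=
  ∑ A ∈ 𝒜.filter (fun A => A.mulVec u = 0), p A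

/-- Lemma 9 of the paper: for two independent matrix ensembles over a finite
    field whose annihilation probabilities depend only on the type, with hash
    constants (α_A,β_A) and (α_B,β_B) defined from the average spectrum over a
    common set Ĥ of (nonzero, type-closed) high-weight vectors, the product
    ensemble u ↦ (Au, Bu) satisfies the hash inequality with constants
    α_{AB} = α_A α_B and β_{AB} = min{β_A, β_B}. -/
theorem matrix_product_ensemble_hash_property
    {F : Type} [Field F] [Fintype F] [DecidableEq F]
    (lA lB n : ℕ)
    (𝒜 : Finset (Matrix (Fin lA) (Fin n) F))
    (pA : Matrix (Fin lA) (Fin n) F → ℝ)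
    (ℬ : Finset (Matrix (Fin lB) (Fin n) F))
    (pB : Matrix (Fin lB) (Fin n) F → ℝ)
    (hpA0 : ∀ A, 0 ≤ pA A) (hpA1 : ∑ A ∈ 𝒜, pA A = 1)
    (hpB0 : ∀ B, 0 ≤ pB B) (hpB1 : ∑ B ∈ ℬ, pB B = 1)
    (ImA : Finset (Fin lA → F)) (ImB : Finset (Fin lB → F))
    (hImA : ImA = 𝒜.biUnion (fun A => Finset.image A.mulVec Finset.univ))
    (hImB : ImB = ℬ.biUnion (fun B => Finset.image B.mulVec Finset.univ))
    (hdepA : ∀ u u' : Fin n → F, vecType u = vecType u' →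
      pZero 𝒜 pA u = pZero 𝒜 pA u')
    (hdepB : ∀ u u' : Fin n → F, vecType u = vecType u' →
      pZero ℬ pB u = pZero ℬ pB u')
    (Hhat : Finset (Fin n → F))
    (hHne : Hhat.Nonempty)
    (hH0 : (0 : Fin n → F) ∉ Hhat)
    (hHclosed : ∀ u ∈ Hhat, ∀ u' : Fin n → F, vecType u' = vecType u → u' ∈ Hhat)
    (αA βA αB βB : ℝ)
    (hαA : αA = (ImA.card : ℝ) * Hhat.sup' hHne (pZero 𝒜 pA))
    (hβA : βA = ∑ u ∈ Finset.univ.filter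
        (fun u : Fin n → F => u ≠ 0 ∧ u ∉ Hhat), pZero 𝒜 pA u)
    (hαB : αB = (ImB.card : ℝ) * Hhat.sup' hHne (pZero ℬ pB))
    (hβB : βB = ∑ u ∈ Finset.univ.filter
        (fun u : Fin n → F => u ≠ 0 ∧ u ∉ Hhat), pZero ℬ pB u)
    (hhashA : ∀ T T' : Finset (Fin n → F),
      (∑ u ∈ T, ∑ u' ∈ T',
        ∑ A ∈ 𝒜.filter (fun A => A.mulVec u = A.mulVec u'), pA A)
      ≤ ((T ∩ T').card : ℝ)
        + (T.card : ℝ) * (T'.card : ℝ) * αA / (ImA.card : ℝ)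
        + (min T.card T'.card : ℝ) * βA)
    (hhashB : ∀ T T' : Finset (Fin n → F),
      (∑ u ∈ T, ∑ u' ∈ T',
        ∑ B ∈ ℬ.filter (fun B => B.mulVec u = B.mulVec u'), pB B)
      ≤ ((T ∩ T').card : ℝ)
        + (T.card : ℝ) * (T'.card : ℝ) * αB / (ImB.card : ℝ)
        + (min T.card T'.card : ℝ) * βB) :
    ∀ T T' : Finset (Fin n → F),
      (∑ u ∈ T, ∑ u' ∈ T',
        ∑ A ∈ 𝒜.filter (fun A => A.mulVec u = A.mulVec u'),
          ∑ B ∈ ℬ.filter (fun B => B.mulVec u = B.mulVec u'),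
            pA A * pB B)
      ≤ ((T ∩ T').card : ℝ)
        + (T.card : ℝ) * (T'.card : ℝ) * (αA * αB)
            / ((ImA.card : ℝ) * (ImB.card : ℝ))
        + (min T.card T'.card : ℝ) * (min βA βB) := by
  intro T T'
  -- basic positivity and normalization facts
  have h0A : ∀ v : Fin n → F, 0 ≤ pZero 𝒜 pA v := fun v =>
    Finset.sum_nonneg fun A _ => hpA0 A
  have h0B : ∀ v : Fin n → F, 0 ≤ pZero ℬ pB v := fun v =>
    Finset.sum_nonneg fun B _ => hpB0 B
  have h1A : ∀ v : Fin n → F, pZero 𝒜 pA v ≤ 1 := by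
    intro v
    rw [pZero, ← hpA1]
    exact Finset.sum_le_sum_of_subset_of_nonneg (Finset.filter_subset _ _)
      fun A hA _ => hpA0 A
  have h1B : ∀ v : Fin n → F, pZero ℬ pB v ≤ 1 := by
    intro v
    rw [pZero, ← hpB1]
    exact Finset.sum_le_sum_of_subset_of_nonneg (Finset.filter_subset _ _)
      fun B hB _ => hpB0 B
  have hzA : pZero 𝒜 pA 0 = 1 := by
    rw [pZero, Finset.filter_true_of_mem (fun A _ => Matrix.mulVec_zero A)]
    exact hpA1
  have hzB : pZero ℬ pB 0 = 1 := by
    rw [pZero, Finset.filter_true_of_mem (fun B _ => Matrix.mulVec_zero B)]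
    exact hpB1
  set sA := Hhat.sup' hHne (pZero 𝒜 pA) with hsAdef
  set sB := Hhat.sup' hHne (pZero ℬ pB) with hsBdef
  obtain ⟨v0, hv0⟩ := hHne
  have hsA0 : 0 ≤ sA := le_trans (h0A v0) (Finset.le_sup' _ hv0)
  have hsB0 : 0 ≤ sB := le_trans (h0B v0) (Finset.le_sup' _ hv0)
  have hAne : 𝒜.Nonempty := by
    by_contra h
    rw [Finset.not_nonempty_iff_eq_empty] at h
    simp [h] at hpA1
  have hBne : ℬ.Nonempty := by
    by_contra h
    rw [Finset.not_nonempty_iff_eq_empty] at h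
    simp [h] at hpB1
  have hImAne : ImA.Nonempty := by
    obtain ⟨A, hA⟩ := hAne
    rw [hImA]
    exact ⟨A.mulVec 0, Finset.mem_biUnion.2
      ⟨A, hA, Finset.mem_image.2 ⟨0, Finset.mem_univ _, rfl⟩⟩⟩
  have hImBne : ImB.Nonempty := by
    obtain ⟨B, hB⟩ := hBne
    rw [hImB]
    exact ⟨B.mulVec 0, Finset.mem_biUnion.2
      ⟨B, hB, Finset.mem_image.2 ⟨0, Finset.mem_univ _, rfl⟩⟩⟩
  have hcA : (0:ℝ) < (ImA.card : ℝ) := by exact_mod_cast Finset.card_pos.2 hImAne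
  have hcB : (0:ℝ) < (ImB.card : ℝ) := by exact_mod_cast Finset.card_pos.2 hImBne
  have hfrac : αA * αB / ((ImA.card : ℝ) * (ImB.card : ℝ)) = sA * sB := by
    rw [hαA, hαB]
    field_simp
  have hβA0 : 0 ≤ βA := by
    rw [hβA]; exact Finset.sum_nonneg fun v _ => h0A v
  have hβB0 : 0 ≤ βB := by
    rw [hβB]; exact Finset.sum_nonneg fun v _ => h0B v
  -- the key factorization
  have key : ∀ u u' : Fin n → F,
      (∑ A ∈ 𝒜.filter (fun A => A.mulVec u = A.mulVec u'),
        ∑ B ∈ ℬ.filter (fun B => B.mulVec u = B.mulVec u'), pA A * pB B)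
      = pZero 𝒜 pA (u - u') * pZero ℬ pB (u - u') := by
    intro u u'
    have hA : 𝒜.filter (fun A => A.mulVec u = A.mulVec u')
        = 𝒜.filter (fun A => A.mulVec (u - u') = 0) :=
      Finset.filter_congr fun A _ => by rw [Matrix.mulVec_sub, sub_eq_zero]
    have hB : ℬ.filter (fun B => B.mulVec u = B.mulVec u')
        = ℬ.filter (fun B => B.mulVec (u - u') = 0) :=
      Finset.filter_congr fun B _ => by rw [Matrix.mulVec_sub, sub_eq_zero]
    rw [hA, hB, pZero, pZero, Finset.sum_mul_sum]
  -- inner injection bound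
  have hinner : ∀ (pz : (Fin n → F) → ℝ), (∀ v, 0 ≤ pz v) →
      ∀ (S : Finset (Fin n → F)) (φ : (Fin n → F) → (Fin n → F)),
      Function.Injective φ → (∀ w ∈ S, φ w ≠ 0 ∧ φ w ∉ Hhat) →
      ∑ w ∈ S, pz (φ w) ≤
        ∑ v ∈ Finset.univ.filter (fun v : Fin n → F => v ≠ 0 ∧ v ∉ Hhat), pz v := by
    intro pz h0 S φ hinj hmem
    rw [← Finset.sum_image (fun a _ b _ h => hinj h)]
    apply Finset.sum_le_sum_of_subset_of_nonneg
    · intro v hv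
      rw [Finset.mem_image] at hv
      obtain ⟨w, hw, rfl⟩ := hv
      rw [Finset.mem_filter]
      exact ⟨Finset.mem_univ _, hmem w hw⟩
    · intro v _ _; exact h0 v
  -- main rewrite to a sum over the product
  have step1 : (∑ u ∈ T, ∑ u' ∈ T',
        ∑ A ∈ 𝒜.filter (fun A => A.mulVec u = A.mulVec u'),
          ∑ B ∈ ℬ.filter (fun B => B.mulVec u = B.mulVec u'),
            pA A * pB B)
      = ∑ p ∈ T ×ˢ T', pZero 𝒜 pA (p.1 - p.2) * pZero ℬ pB (p.1 - p.2) := by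
    rw [Finset.sum_product]
    exact Finset.sum_congr rfl fun u _ => Finset.sum_congr rfl fun u' _ => key u u'
  set P := T ×ˢ T' with hPdef
  set f : (Fin n → F) × (Fin n → F) → ℝ :=
    fun p => pZero 𝒜 pA (p.1 - p.2) * pZero ℬ pB (p.1 - p.2) with hfdef
  -- diagonal part
  have hdiag : ∑ p ∈ P.filter (fun p => p.1 = p.2), f p = ((T ∩ T').card : ℝ) := by
    have he : P.filter (fun p => p.1 = p.2) = (T ∩ T').image (fun v => (v, v)) := by
      ext p
      simp only [hPdef, Finset.mem_filter, Finset.mem_product, Finset.mem_image,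
        Finset.mem_inter]
      constructor
      · rintro ⟨⟨h1, h2⟩, h3⟩
        exact ⟨p.1, ⟨h1, h3 ▸ h2⟩, Prod.ext_iff.mpr ⟨rfl, h3⟩⟩
      · rintro ⟨v, ⟨hv1, hv2⟩, rfl⟩
        exact ⟨⟨hv1, hv2⟩, rfl⟩
    rw [he, Finset.sum_image (fun a _ b _ h => by simpa using congrArg Prod.fst h)]
    simp [hfdef, sub_self, hzA, hzB]
  -- middle (Hhat) part
  have hmid : ∑ p ∈ (P.filter (fun p => ¬ p.1 = p.2)).filter (fun p => p.1 - p.2 ∈ Hhat), f p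
      ≤ (T.card : ℝ) * (T'.card : ℝ) * (sA * sB) := by
    have hb : ∀ p ∈ (P.filter (fun p => ¬ p.1 = p.2)).filter (fun p => p.1 - p.2 ∈ Hhat),
        f p ≤ sA * sB := by
      intro p hp
      rw [Finset.mem_filter] at hp
      exact mul_le_mul (Finset.le_sup' _ hp.2) (Finset.le_sup' _ hp.2) (h0B _) hsA0
    calc ∑ p ∈ (P.filter (fun p => ¬ p.1 = p.2)).filter (fun p => p.1 - p.2 ∈ Hhat), f p
        ≤ (((P.filter (fun p => ¬ p.1 = p.2)).filter (fun p => p.1 - p.2 ∈ Hhat)).card : ℝ)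
            * (sA * sB) := by
          have := Finset.sum_le_card_nsmul _ f (sA * sB) hb
          rwa [nsmul_eq_mul] at this
      _ ≤ (T.card : ℝ) * (T'.card : ℝ) * (sA * sB) := by
          apply mul_le_mul_of_nonneg_right _ (mul_nonneg hsA0 hsB0)
          have hle : ((P.filter (fun p => ¬ p.1 = p.2)).filter (fun p => p.1 - p.2 ∈ Hhat)).card
              ≤ P.card :=
            Finset.card_le_card ((Finset.filter_subset _ _).trans (Finset.filter_subset _ _))
          have : P.card = T.card * T'.card := Finset.card_product T T'
          rw [← Nat.cast_mul, ← this]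
          exact_mod_cast hle
  -- low-weight part
  set R := (P.filter (fun p => ¬ p.1 = p.2)).filter (fun p => p.1 - p.2 ∉ Hhat) with hRdef
  have hRR : R = P.filter (fun p => (¬ p.1 = p.2) ∧ p.1 - p.2 ∉ Hhat) := by
    rw [hRdef, Finset.filter_filter]
  have hlowgen : ∀ (pz : (Fin n → F) → ℝ), (∀ v, 0 ≤ pz v) → (∀ v, pz v ≤ 1) →
      (∑ p ∈ R, pz (p.1 - p.2)
        ≤ (T.card : ℝ) * ∑ v ∈ Finset.univ.filter (fun v : Fin n → F => v ≠ 0 ∧ v ∉ Hhat), pz v)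
      ∧ (∑ p ∈ R, pz (p.1 - p.2)
        ≤ (T'.card : ℝ) * ∑ v ∈ Finset.univ.filter (fun v : Fin n → F => v ≠ 0 ∧ v ∉ Hhat), pz v) := by
    intro pz h0 _
    set β := ∑ v ∈ Finset.univ.filter (fun v : Fin n → F => v ≠ 0 ∧ v ∉ Hhat), pz v with hβdef
    constructor
    · have : ∑ p ∈ R, pz (p.1 - p.2)
          = ∑ u ∈ T, ∑ u' ∈ T'.filter (fun u' => (¬ u = u') ∧ u - u' ∉ Hhat), pz (u - u') := by
        rw [hRR, hPdef, Finset.sum_filter, Finset.sum_product]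
        exact Finset.sum_congr rfl fun u _ => (Finset.sum_filter _ _).symm
      rw [this]
      calc ∑ u ∈ T, ∑ u' ∈ T'.filter (fun u' => (¬ u = u') ∧ u - u' ∉ Hhat), pz (u - u')
          ≤ ∑ _u ∈ T, β := by
            apply Finset.sum_le_sum
            intro u _
            apply hinner pz h0 _ (fun u' => u - u') sub_right_injective
            intro w hw
            rw [Finset.mem_filter] at hw
            exact ⟨sub_ne_zero_of_ne hw.2.1, hw.2.2⟩
        _ = (T.card : ℝ) * β := by rw [Finset.sum_const, nsmul_eq_mul]
    · have : ∑ p ∈ R, pz (p.1 - p.2)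
          = ∑ u' ∈ T', ∑ u ∈ T.filter (fun u => (¬ u = u') ∧ u - u' ∉ Hhat), pz (u - u') := by
        rw [hRR, hPdef, Finset.sum_filter, Finset.sum_product, Finset.sum_comm]
        exact Finset.sum_congr rfl fun u' _ => (Finset.sum_filter _ _).symm
      rw [this]
      calc ∑ u' ∈ T', ∑ u ∈ T.filter (fun u => (¬ u = u') ∧ u - u' ∉ Hhat), pz (u - u')
          ≤ ∑ _u' ∈ T', β := by
            apply Finset.sum_le_sum
            intro u' _
            apply hinner pz h0 _ (fun u => u - u') (sub_left_injective)
            intro w hw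
            rw [Finset.mem_filter] at hw
            exact ⟨sub_ne_zero_of_ne hw.2.1, hw.2.2⟩
        _ = (T'.card : ℝ) * β := by rw [Finset.sum_const, nsmul_eq_mul]
  have hlow : ∑ p ∈ R, f p ≤ (min T.card T'.card : ℝ) * min βA βB := by
    have hfA : ∑ p ∈ R, f p ≤ ∑ p ∈ R, pZero 𝒜 pA (p.1 - p.2) :=
      Finset.sum_le_sum fun p _ =>
        mul_le_of_le_one_right (h0A _) (h1B _)
    have hfB : ∑ p ∈ R, f p ≤ ∑ p ∈ R, pZero ℬ pB (p.1 - p.2) :=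
      Finset.sum_le_sum fun p _ =>
        mul_le_of_le_one_left (h0B _) (h1A _)
    have hA2 := hlowgen (pZero 𝒜 pA) h0A h1A
    have hB2 := hlowgen (pZero ℬ pB) h0B h1B
    rcases min_choice βA βB with h | h <;> rw [h]
    · rw [hβA]
      rcases le_total T.card T'.card with hc | hc
      · rw [min_eq_left (by exact_mod_cast hc : ((T.card : ℝ)) ≤ (T'.card : ℝ))]
        exact hfA.trans hA2.1
      · rw [min_eq_right (by exact_mod_cast hc : ((T'.card : ℝ)) ≤ (T.card : ℝ))]
        exact hfA.trans hA2.2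
    · rw [hβB]
      rcases le_total T.card T'.card with hc | hc
      · rw [min_eq_left (by exact_mod_cast hc : ((T.card : ℝ)) ≤ (T'.card : ℝ))]
        exact hfB.trans hB2.1
      · rw [min_eq_right (by exact_mod_cast hc : ((T'.card : ℝ)) ≤ (T.card : ℝ))]
        exact hfB.trans hB2.2
  -- assemble
  rw [step1]
  have hsplit : ∑ p ∈ P, f p
      = ∑ p ∈ P.filter (fun p => p.1 = p.2), f p
        + (∑ p ∈ (P.filter (fun p => ¬ p.1 = p.2)).filter (fun p => p.1 - p.2 ∈ Hhat), f p
            + ∑ p ∈ R, f p) := by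
    rw [hRdef, Finset.sum_filter_add_sum_filter_not, Finset.sum_filter_add_sum_filter_not]
  calc ∑ p ∈ P, f p
      = ∑ p ∈ P.filter (fun p => p.1 = p.2), f p
        + (∑ p ∈ (P.filter (fun p => ¬ p.1 = p.2)).filter (fun p => p.1 - p.2 ∈ Hhat), f p
            + ∑ p ∈ R, f p) := hsplit
    _ ≤ ((T ∩ T').card : ℝ)
        + ((T.card : ℝ) * (T'.card : ℝ) * (sA * sB)
            + (min T.card T'.card : ℝ) * min βA βB) := by
        rw [hdiag]
        exact add_le_add le_rfl (add_le_add hmid hlow)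
    _ = ((T ∩ T').card : ℝ)
        + (T.card : ℝ) * (T'.card : ℝ) * (αA * αB)
            / ((ImA.card : ℝ) * (ImB.card : ℝ))
        + (min T.card T'.card : ℝ) * min βA βB := by
        rw [mul_div_assoc, hfrac]
        ring
end

section
/- Let p_A be a probability distribution on a set of l×n matrices over the finite field F_q such that p_A({A : Au = 0}) depends on u only through its type t(u). Let α(n) := |Im A| max_{t∈Ĥ} p_{A,t} and β(n) := Σ_{t∈H\Ĥ} |C_t| p_{A,t}, where p_{A,t} := p_A({A : Au = 0}) for any u of type t, C_t := {u : t(u) = t}, H is the set of all nonzero types and Ĥ ⊆ H. Then for any subsets T, T' of F_q^n: Σ_{u∈T, u'∈T'} p_A({A : Au = Au'}) ≤ |T∩T'| + |T||T'|α(n)/|Im A| + min{|T|,|T'|}β(n). -/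
open scoped Classical BigOperators

/-- Theorem 1 of the paper: an ensemble of l×n matrices over a finite field
    whose annihilation probability depends only on the type of the vector
    satisfies the (α,β)-hash inequality, where
    α = |Im 𝒜| · max_{t ∈ Hhat} p_{A,t} and β = Σ_{t ∈ H\Hhat} |C_t| p_{A,t}
    (here Hhat is represented as a type-closed set of nonzero vectors, and the
    β-sum over vectors u ≠ 0 with u ∉ Hhat counts each type |C_t| times). -/
theorem matrix_ensemble_hash_property
    {F : Type} [Field F] [Fintype F] [DecidableEq F]
    (l n : ℕ)
    (𝒜 : Finset (Matrix (Fin l) (Fin n) F))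
    (p : Matrix (Fin l) (Fin n) F → ℝ)
    (hp0 : ∀ A, 0 ≤ p A) (hp1 : ∑ A ∈ 𝒜, p A = 1)
    (Im : Finset (Fin l → F))
    (hIm : Im = 𝒜.biUnion (fun A => Finset.image A.mulVec Finset.univ))
    (hdep : ∀ u u' : Fin n → F, vecType u = vecType u' →
      pZero 𝒜 p u = pZero 𝒜 p u')
    (Hhat : Finset (Fin n → F))
    (hHhatne : Hhat.Nonempty)
    (hHhat0 : (0 : Fin n → F) ∉ Hhat)
    (hHhatclosed : ∀ u ∈ Hhat, ∀ u' : Fin n → F, vecType u' = vecType u → u' ∈ Hhat)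
    (α β : ℝ)
    (hα : α = (Im.card : ℝ) * Hhat.sup' hHhatne (pZero 𝒜 p))
    (hβ : β = ∑ u ∈ Finset.univ.filter
        (fun u : Fin n → F => u ≠ 0 ∧ u ∉ Hhat), pZero 𝒜 p u) :
    ∀ T T' : Finset (Fin n → F),
      (∑ u ∈ T, ∑ u' ∈ T',
        ∑ A ∈ 𝒜.filter (fun A => A.mulVec u = A.mulVec u'), p A)
      ≤ ((T ∩ T').card : ℝ)
        + (T.card : ℝ) * (T'.card : ℝ) * α / (Im.card : ℝ)
        + (min T.card T'.card : ℝ) * β := by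
  classical
  have hAne : 𝒜.Nonempty := by
    by_contra h
    rw [Finset.not_nonempty_iff_eq_empty] at h
    simp [h] at hp1
  have hpZ0 : ∀ v : Fin n → F, 0 ≤ pZero 𝒜 p v := fun v =>
    Finset.sum_nonneg fun A _ => hp0 A
  have hpZ1 : ∀ v : Fin n → F, pZero 𝒜 p v ≤ 1 := by
    intro v
    rw [← hp1]
    exact Finset.sum_le_sum_of_subset_of_nonneg (Finset.filter_subset _ _)
      (fun A hA _ => hp0 A)
  have hImpos : (0:ℝ) < (Im.card : ℝ) := by
    have hne : Im.Nonempty := by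
      obtain ⟨A, hA⟩ := hAne
      refine ⟨A.mulVec 0, ?_⟩
      rw [hIm]
      exact Finset.mem_biUnion.2 ⟨A, hA, Finset.mem_image.2 ⟨0, Finset.mem_univ _, rfl⟩⟩
    exact_mod_cast Finset.card_pos.2 hne
  set M := Hhat.sup' hHhatne (pZero 𝒜 p) with hM
  have hMnn : 0 ≤ M := by
    obtain ⟨v, hv⟩ := hHhatne
    exact le_trans (hpZ0 v) (Finset.le_sup' _ hv)
  have hαdiv : α / (Im.card : ℝ) = M := by
    rw [hα]
    field_simp
  have hconv : ∀ u u' : Fin n → F,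
      (∑ A ∈ 𝒜.filter (fun A => A.mulVec u = A.mulVec u'), p A) = pZero 𝒜 p (u - u') := by
    intro u u'
    unfold pZero
    congr 1
    apply Finset.filter_congr
    intro A _
    simp only [Matrix.mulVec_sub, sub_eq_zero]
  have hneg : ∀ v : Fin n → F, pZero 𝒜 p (-v) = pZero 𝒜 p v := by
    intro v
    unfold pZero
    congr 1
    apply Finset.filter_congr
    intro A _
    simp only [Matrix.mulVec_neg, neg_eq_zero]
  have hβnn : 0 ≤ β := by
    rw [hβ]; exact Finset.sum_nonneg fun v _ => hpZ0 v
  -- per-row bound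
  have hrow : ∀ (u : Fin n → F) (S : Finset (Fin n → F)),
      (∑ u' ∈ S, pZero 𝒜 p (u - u'))
        ≤ (if u ∈ S then (1:ℝ) else 0) + (S.card : ℝ) * M + β := by
    intro u S
    rw [← Finset.sum_filter_add_sum_filter_not S (fun u' => u' = u)
      (fun u' => pZero 𝒜 p (u - u')),
      ← Finset.sum_filter_add_sum_filter_not (S.filter (fun u' => ¬ u' = u))
      (fun u' => u - u' ∈ Hhat) (fun u' => pZero 𝒜 p (u - u')), add_assoc]
    gcongr
    · rw [Finset.filter_eq' S u]
      split_ifs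
      · simpa using hpZ1 (u - u)
      · simp
    · calc (∑ u' ∈ (S.filter (fun u' => ¬ u' = u)).filter (fun u' => u - u' ∈ Hhat),
            pZero 𝒜 p (u - u'))
          ≤ ((S.filter (fun u' => ¬ u' = u)).filter (fun u' => u - u' ∈ Hhat)).card • M := by
            apply Finset.sum_le_card_nsmul
            intro x hx
            exact Finset.le_sup' _ (Finset.mem_filter.1 hx).2
        _ ≤ (S.card : ℝ) * M := by
            rw [nsmul_eq_mul]
            apply mul_le_mul_of_nonneg_right _ hMnn
            exact_mod_cast le_trans (Finset.card_filter_le _ _)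
              (Finset.card_filter_le _ _)
    · set s3 := (S.filter (fun u' => ¬ u' = u)).filter (fun u' => ¬ u - u' ∈ Hhat) with hs3
      have hinj : ∀ a ∈ s3, ∀ b ∈ s3, u - a = u - b → a = b := by
        intro a _ b _ hab
        have := sub_right_injective (G := Fin n → F) hab
        simpa using this
      calc (∑ u' ∈ s3, pZero 𝒜 p (u - u'))
          = ∑ v ∈ s3.image (fun u' => u - u'), pZero 𝒜 p v := by
            rw [Finset.sum_image hinj]
        _ ≤ β := by
            rw [hβ]
            apply Finset.sum_le_sum_of_subset_of_nonneg
            · intro v hv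
              obtain ⟨u', hu', rfl⟩ := Finset.mem_image.1 hv
              rw [hs3, Finset.mem_filter, Finset.mem_filter] at hu'
              refine Finset.mem_filter.2 ⟨Finset.mem_univ _, ?_, hu'.2⟩
              exact sub_ne_zero.2 fun h => hu'.1.2 h.symm
            · intro v _ _
              exact hpZ0 v
  have key : ∀ T T' : Finset (Fin n → F),
      (∑ u ∈ T, ∑ u' ∈ T', pZero 𝒜 p (u - u'))
        ≤ ((T ∩ T').card : ℝ) + (T.card : ℝ) * (T'.card : ℝ) * M + (T.card : ℝ) * β := by
    intro T T'
    calc (∑ u ∈ T, ∑ u' ∈ T', pZero 𝒜 p (u - u'))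
        ≤ ∑ u ∈ T, ((if u ∈ T' then (1:ℝ) else 0) + (T'.card:ℝ)*M + β) :=
          Finset.sum_le_sum fun u _ => hrow u T'
      _ = ((T ∩ T').card : ℝ) + (T.card : ℝ) * (T'.card : ℝ) * M + (T.card : ℝ) * β := by
          rw [Finset.sum_add_distrib, Finset.sum_add_distrib, Finset.sum_const,
            Finset.sum_const, Finset.sum_ite_mem]
          simp [mul_assoc]
  have hsym : ∀ S S' : Finset (Fin n → F),
      (∑ u ∈ S, ∑ u' ∈ S', pZero 𝒜 p (u - u'))
        = ∑ u ∈ S', ∑ u' ∈ S, pZero 𝒜 p (u - u') := by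
    intro S S'
    rw [Finset.sum_comm]
    refine Finset.sum_congr rfl fun a _ => Finset.sum_congr rfl fun b _ => ?_
    rw [← neg_sub a b, hneg]
  intro T T'
  have hL : (∑ u ∈ T, ∑ u' ∈ T',
      ∑ A ∈ 𝒜.filter (fun A => A.mulVec u = A.mulVec u'), p A)
      = ∑ u ∈ T, ∑ u' ∈ T', pZero 𝒜 p (u - u') :=
    Finset.sum_congr rfl fun u _ => Finset.sum_congr rfl fun u' _ => hconv u u'
  have hdivM : (T.card : ℝ) * (T'.card : ℝ) * α / (Im.card : ℝ)
      = (T.card : ℝ) * (T'.card : ℝ) * M := by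
    rw [mul_div_assoc, hαdiv]
  rw [hL, hdivM]
  rcases le_total T.card T'.card with h | h
  · rw [min_eq_left (show (T.card:ℝ) ≤ (T'.card:ℝ) by exact_mod_cast h)]
    exact key T T'
  · rw [min_eq_right (show (T'.card:ℝ) ≤ (T.card:ℝ) by exact_mod_cast h), hsym T T', Finset.inter_comm]
    calc (∑ u ∈ T', ∑ u' ∈ T, pZero 𝒜 p (u - u'))
        ≤ ((T' ∩ T).card : ℝ) + (T'.card : ℝ) * (T.card : ℝ) * M + (T'.card : ℝ) * β :=
          key T' T
      _ = ((T' ∩ T).card : ℝ) + (T.card : ℝ) * (T'.card : ℝ) * M + (T'.card : ℝ) * β := by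
          ring
end

section
/- For the ensemble of l×n sparse matrices over GF(q) generated by the column-wise procedure (each column receives τ additions of a uniformly random nonzero field element at a uniformly random row position), the probability p_A({A : Au = 0}) depends on u only through the Hamming weight w of u, and equals (1/q^l) Σ_{k=0}^{l} (1 − qk/((q−1)l))^{wτ} C(l,k) (q−1)^k. -/
open scoped Classical BigOperators

/-- The sparse matrix determined by the random choices
    s i t = (row position, nonzero element) of the t-th addition in column i. -/
noncomputable def sparseMat {F : Type} [Field F] [Fintype F] [DecidableEq F]
    (l n τ : ℕ) (s : Fin n → Fin τ → Fin l × {a : F // a ≠ 0}) :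
    Matrix (Fin l) (Fin n) F :=
  fun j i => ∑ t : Fin τ, if (s i t).1 = j then ((s i t).2 : F) else 0

open Finset

private lemma addChar_map_sum {A M : Type*} [AddCommMonoid A] [CommMonoid M]
    (ψ : AddChar A M) {ι : Type*} (s : Finset ι) (f : ι → A) :
    ψ (∑ i ∈ s, f i) = ∏ i ∈ s, ψ (f i) := by
  induction s using Finset.cons_induction with
  | empty => simp
  | cons a s ha ih => rw [Finset.sum_cons, Finset.prod_cons, AddChar.map_add_eq_mul, ih]

private lemma count_weight (F : Type) [Field F] [Fintype F] [DecidableEq F] (l k : ℕ) :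
    (Finset.univ.filter
      (fun b : Fin l → F => (Finset.univ.filter (fun j => b j ≠ 0)).card = k)).card
      = l.choose k * (Fintype.card F - 1) ^ k := by
  classical
  rw [Finset.card_eq_sum_card_fiberwise
    (f := fun b : Fin l → F => Finset.univ.filter (fun j => b j ≠ 0))
    (t := Finset.powersetCard k (Finset.univ : Finset (Fin l)))
    (fun b hb => Finset.mem_powersetCard.mpr
      ⟨Finset.subset_univ _, (Finset.mem_filter.mp hb).2⟩)]
  have hfib : ∀ T ∈ Finset.powersetCard k (Finset.univ : Finset (Fin l)),
      ((Finset.univ.filter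
        (fun b : Fin l → F => (Finset.univ.filter (fun j => b j ≠ 0)).card = k)).filter
          (fun b => Finset.univ.filter (fun j => b j ≠ 0) = T)).card
        = (Fintype.card F - 1) ^ k := by
    intro T hT
    obtain ⟨-, hTk⟩ := Finset.mem_powersetCard.mp hT
    have hsupp : ∀ b : Fin l → F,
        (Finset.univ.filter (fun j => b j ≠ 0) = T ↔
          ∀ j, if j ∈ T then b j ≠ 0 else b j = 0) := by
      intro b
      rw [Finset.ext_iff]
      simp only [Finset.mem_filter, Finset.mem_univ, true_and]
      constructor
      · intro h j
        by_cases hj : j ∈ T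
        · simpa [hj] using (h j).mpr hj
        · simp only [hj, if_false]
          by_contra hb
          exact hj ((h j).mp hb)
      · intro h j
        have := h j
        by_cases hj : j ∈ T <;> simp [hj] at this <;> simp [hj, this]
    have hset : ((Finset.univ.filter
        (fun b : Fin l → F => (Finset.univ.filter (fun j => b j ≠ 0)).card = k)).filter
          (fun b => Finset.univ.filter (fun j => b j ≠ 0) = T))
        = Fintype.piFinset (fun j : Fin l =>
            if j ∈ T then Finset.univ.filter (fun a : F => a ≠ 0) else ({0} : Finset F)) := by
      ext b
      simp only [Finset.mem_filter, Finset.mem_univ, true_and, Fintype.mem_piFinset]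
      constructor
      · rintro ⟨-, hTb⟩ j
        have := (hsupp b).mp hTb j
        by_cases hj : j ∈ T <;> simp [hj] at this ⊢ <;> exact this
      · intro h
        have hTb : Finset.univ.filter (fun j => b j ≠ 0) = T := by
          refine (hsupp b).mpr fun j => ?_
          have := h j
          by_cases hj : j ∈ T <;> simpa [hj] using this
        exact ⟨by rw [hTb, hTk], hTb⟩
    rw [hset, Fintype.card_piFinset]
    have : ∀ j : Fin l,
        (if j ∈ T then Finset.univ.filter (fun a : F => a ≠ 0) else ({0} : Finset F)).card
        = if j ∈ T then Fintype.card F - 1 else 1 := by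
      intro j
      by_cases hj : j ∈ T <;> simp [hj, Finset.filter_ne', Finset.card_erase_of_mem]
    rw [Finset.prod_congr rfl (fun j _ => this j)]
    rw [Finset.prod_ite_mem, Finset.univ_inter, Finset.prod_const, hTk]
  rw [Finset.sum_congr rfl hfib, Finset.sum_const, Finset.card_powersetCard,
    Finset.card_univ, Fintype.card_fin, smul_eq_mul]

private lemma innerPairSum {F : Type} [Field F] [Fintype F] [DecidableEq F] {l n : ℕ}
    (u : Fin n → F) (ψ : AddChar F ℂ) (hψ : ψ.IsPrimitive) (b : Fin l → F) (i : Fin n) :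
    (∑ p : Fin l × {a : F // a ≠ 0}, ψ (b p.1 * ((p.2 : F) * u i)))
    = if u i = 0 then (l : ℂ) * ((Fintype.card F : ℂ) - 1)
      else (Fintype.card F : ℂ) * ((Finset.univ.filter (fun j : Fin l => b j = 0)).card : ℂ)
        - (l : ℂ) := by
  classical
  have cardP : Fintype.card {a : F // a ≠ 0} = Fintype.card F - 1 := by
    simp [Fintype.card_subtype_compl]
  by_cases hui : u i = 0
  · rw [if_pos hui]
    simp only [hui, mul_zero, zero_mul, AddChar.map_zero_eq_one]
    rw [Finset.sum_const, Finset.card_univ, Fintype.card_prod, cardP, Fintype.card_fin,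
      nsmul_eq_mul]
    have h2 : (1:ℕ) ≤ Fintype.card F := Fintype.card_pos
    push_cast [Nat.cast_sub h2]
    ring
  · rw [if_neg hui, Fintype.sum_prod_type]
    have hj : ∀ j : Fin l, (∑ a : {a : F // a ≠ 0}, ψ (b j * ((a : F) * u i)))
        = (if b j = 0 then (Fintype.card F : ℂ) else 0) - 1 := by
      intro j
      let e : {a : F // a ≠ 0} ≃ {a : F // a ≠ 0} :=
        { toFun := fun a => ⟨(a : F) * u i, mul_ne_zero a.2 hui⟩
          invFun := fun a => ⟨(a : F) * (u i)⁻¹, mul_ne_zero a.2 (inv_ne_zero hui)⟩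
          left_inv := fun a => by
            ext
            field_simp
          right_inv := fun a => by
            ext
            field_simp }
      have h1 : (∑ a : {a : F // a ≠ 0}, ψ (b j * ((a : F) * u i)))
          = ∑ c : {a : F // a ≠ 0}, ψ (b j * (c : F)) :=
        Equiv.sum_comp e (fun c : {a : F // a ≠ 0} => ψ (b j * (c : F)))
      rw [h1]
      have h2 : (∑ c : {a : F // a ≠ 0}, ψ (b j * (c : F)))
          = ∑ c ∈ Finset.univ.filter (fun a : F => a ≠ 0), ψ (b j * c) := by
        exact (Finset.sum_subtype (p := fun a : F => a ≠ 0)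
          (Finset.univ.filter (fun a : F => a ≠ 0)) (by simp) (fun c => ψ (b j * c))).symm
      rw [h2]
      have h3 : (∑ c : F, ψ (b j * c)) = if b j = 0 then (Fintype.card F : ℂ) else 0 := by
        simp_rw [mul_comm (b j)]
        simpa using AddChar.sum_mulShift (b j) hψ
      have h4 : (∑ c : F, ψ (b j * c))
          = (∑ c ∈ Finset.univ.filter (fun a : F => a ≠ 0), ψ (b j * c)) + ψ (b j * 0) := by
        rw [Finset.filter_ne', Finset.sum_erase_add _ _ (Finset.mem_univ 0)]
      rw [eq_sub_iff_add_eq, ← h3, h4]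
      simp
    rw [Finset.sum_congr rfl (fun j _ => hj j), Finset.sum_sub_distrib,
      Finset.sum_ite, Finset.sum_const, Finset.sum_const_zero, add_zero,
      Finset.sum_const, Finset.card_univ, Fintype.card_fin, nsmul_eq_mul, nsmul_eq_mul]
    ring

private lemma weightFiberSum {F : Type} [Field F] [Fintype F] [DecidableEq F] (l m : ℕ) :
    (∑ b : Fin l → F,
      ((Fintype.card F : ℂ) * ((Finset.univ.filter (fun j : Fin l => b j = 0)).card : ℂ)
        - (l : ℂ)) ^ m)
    = ∑ k ∈ Finset.range (l + 1),
        ((l : ℂ) * ((Fintype.card F : ℂ) - 1) - (Fintype.card F : ℂ) * k) ^ m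
          * (l.choose k : ℂ) * ((Fintype.card F : ℂ) - 1) ^ k := by
  classical
  have hq1 : (1:ℕ) ≤ Fintype.card F := Fintype.card_pos
  rw [← Finset.sum_fiberwise_of_maps_to
    (g := fun b : Fin l → F => (Finset.univ.filter (fun j => b j ≠ 0)).card)
    (t := Finset.range (l + 1))
    (fun b _ => Finset.mem_range.mpr (Nat.lt_succ_of_le (by
      simpa using Finset.card_filter_le Finset.univ (fun j => b j ≠ 0))))]
  refine Finset.sum_congr rfl fun k hk => ?_
  have hkl : k ≤ l := Nat.lt_succ_iff.mp (Finset.mem_range.mp hk)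
  have hval : ∀ b ∈ Finset.univ.filter
      (fun b : Fin l → F => (Finset.univ.filter (fun j => b j ≠ 0)).card = k),
      ((Fintype.card F : ℂ) * ((Finset.univ.filter (fun j : Fin l => b j = 0)).card : ℂ)
        - (l : ℂ)) ^ m
      = ((l : ℂ) * ((Fintype.card F : ℂ) - 1) - (Fintype.card F : ℂ) * k) ^ m := by
    intro b hb
    have hbk : (Finset.univ.filter (fun j => b j ≠ 0)).card = k := (Finset.mem_filter.mp hb).2
    have hz : (Finset.univ.filter (fun j : Fin l => b j = 0)).card + k = l := by
      rw [← hbk]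
      have := Finset.card_filter_add_card_filter_not
        (s := (Finset.univ : Finset (Fin l))) (p := fun j => b j = 0)
      simpa using this
    have hzv : (Finset.univ.filter (fun j : Fin l => b j = 0)).card = l - k := by omega
    rw [hzv]
    congr 1
    push_cast [Nat.cast_sub hkl]
    ring
  rw [Finset.sum_congr rfl hval, Finset.sum_const, count_weight, nsmul_eq_mul]
  push_cast [Nat.cast_sub hq1]
  ring

private lemma key_complex {F : Type} [Field F] [Fintype F] [DecidableEq F]
    (l n τ : ℕ) (u : Fin n → F) :
    ((Fintype.card F : ℂ)) ^ l *
      ((Finset.univ.filter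
        (fun s : Fin n → Fin τ → Fin l × {a : F // a ≠ 0} =>
          (sparseMat l n τ s).mulVec u = 0)).card : ℂ)
    = ((l : ℂ) * ((Fintype.card F : ℂ) - 1))
        ^ ((Finset.univ.filter (fun i : Fin n => u i = 0)).card * τ)
      * ∑ k ∈ Finset.range (l + 1),
          ((l : ℂ) * ((Fintype.card F : ℂ) - 1) - (Fintype.card F : ℂ) * k)
              ^ ((Finset.univ.filter (fun i : Fin n => u i ≠ 0)).card * τ)
            * (l.choose k : ℂ) * ((Fintype.card F : ℂ) - 1) ^ k := by
  classical
  set ψ := AddChar.FiniteField.primitiveChar_to_Complex F with hψdef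
  have hψ : ψ.IsPrimitive := AddChar.FiniteField.primitiveChar_to_Complex_isPrimitive F
  -- orthogonality on F^l
  have orth : ∀ v : Fin l → F,
      (∑ b : Fin l → F, ψ (∑ j, b j * v j)) = if v = 0 then (Fintype.card F : ℂ) ^ l else 0 := by
    intro v
    rw [Finset.sum_congr rfl (fun (b : Fin l → F) _ => addChar_map_sum ψ univ (fun j => b j * v j)),
      ← Fintype.prod_sum (fun (j : Fin l) (c : F) => ψ (c * v j))]
    have h2 : ∀ j, (∑ c : F, ψ (c * v j)) = if v j = 0 then (Fintype.card F : ℂ) else 0 := by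
      intro j
      simpa using AddChar.sum_mulShift (v j) hψ
    rw [Finset.prod_congr rfl (fun j _ => h2 j)]
    by_cases hv : v = 0
    · simp [hv]
    · obtain ⟨j, hj⟩ : ∃ j, v j ≠ 0 := by
        by_contra h
        push_neg at h
        exact hv (funext h)
      rw [if_neg hv]
      exact Finset.prod_eq_zero (Finset.mem_univ j) (if_neg hj)
  -- character expansion of the dot product
  have hB : ∀ s : Fin n → Fin τ → Fin l × {a : F // a ≠ 0}, ∀ b : Fin l → F,
      ψ (∑ j, b j * (sparseMat l n τ s).mulVec u j)
      = ∏ i, ∏ t, ψ (b (s i t).1 * (((s i t).2 : F) * u i)) := by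
    intro s b
    have hd : (∑ j, b j * (sparseMat l n τ s).mulVec u j)
        = ∑ i, ∑ t, b (s i t).1 * (((s i t).2 : F) * u i) := by
      simp only [Matrix.mulVec, dotProduct, sparseMat]
      simp_rw [Finset.mul_sum, Finset.sum_mul]
      rw [Finset.sum_comm]
      refine Finset.sum_congr rfl fun i _ => ?_
      simp_rw [Finset.mul_sum]
      rw [Finset.sum_comm]
      refine Finset.sum_congr rfl fun t _ => ?_
      simp [mul_ite, ite_mul, Finset.sum_ite_eq, mul_assoc]
    rw [hd, addChar_map_sum]
    exact Finset.prod_congr rfl fun i _ => addChar_map_sum ψ _ _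
  calc ((Fintype.card F : ℂ)) ^ l * ((Finset.univ.filter
        (fun s : Fin n → Fin τ → Fin l × {a : F // a ≠ 0} =>
          (sparseMat l n τ s).mulVec u = 0)).card : ℂ)
      = ∑ s : Fin n → Fin τ → Fin l × {a : F // a ≠ 0},
          ∑ b : Fin l → F, ψ (∑ j, b j * (sparseMat l n τ s).mulVec u j) := by
        rw [Finset.sum_congr rfl (fun s _ => orth ((sparseMat l n τ s).mulVec u)),
          Finset.sum_ite, Finset.sum_const, Finset.sum_const_zero, add_zero, nsmul_eq_mul,
          mul_comm]
    _ = ∑ b : Fin l → F, ∑ s : Fin n → Fin τ → Fin l × {a : F // a ≠ 0},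
          ∏ i, ∏ t, ψ (b (s i t).1 * (((s i t).2 : F) * u i)) := by
        rw [Finset.sum_comm]
        exact Finset.sum_congr rfl fun b _ => Finset.sum_congr rfl fun s _ => hB s b
    _ = ∑ b : Fin l → F, ∏ i,
          (∑ p : Fin l × {a : F // a ≠ 0}, ψ (b p.1 * ((p.2 : F) * u i))) ^ τ := by
        refine Finset.sum_congr rfl fun b _ => ?_
        rw [← Fintype.prod_sum (fun (i : Fin n) (si : Fin τ → Fin l × {a : F // a ≠ 0}) =>
          ∏ t, ψ (b (si t).1 * (((si t).2 : F) * u i)))]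
        refine Finset.prod_congr rfl fun i _ => ?_
        rw [Fintype.sum_pow (fun p : Fin l × {a : F // a ≠ 0} => ψ (b p.1 * ((p.2 : F) * u i))) τ]
    _ = ∑ b : Fin l → F, ∏ i,
          (if u i = 0 then (l : ℂ) * ((Fintype.card F : ℂ) - 1)
            else (Fintype.card F : ℂ) * ((Finset.univ.filter (fun j : Fin l => b j = 0)).card : ℂ)
              - (l : ℂ)) ^ τ := by
        refine Finset.sum_congr rfl fun b _ => Finset.prod_congr rfl fun i _ => ?_
        rw [innerPairSum u ψ hψ b i]
    _ = ∑ b : Fin l → F,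
          ((l : ℂ) * ((Fintype.card F : ℂ) - 1))
              ^ ((Finset.univ.filter (fun i : Fin n => u i = 0)).card * τ)
          * ((Fintype.card F : ℂ) * ((Finset.univ.filter (fun j : Fin l => b j = 0)).card : ℂ)
              - (l : ℂ))
              ^ ((Finset.univ.filter (fun i : Fin n => u i ≠ 0)).card * τ) := by
        refine Finset.sum_congr rfl fun b _ => ?_
        simp only [apply_ite (· ^ τ), ne_eq]
        rw [Finset.prod_ite, Finset.prod_const, Finset.prod_const, ← pow_mul, ← pow_mul,
          Nat.mul_comm τ, Nat.mul_comm τ]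
    _ = ((l : ℂ) * ((Fintype.card F : ℂ) - 1))
          ^ ((Finset.univ.filter (fun i : Fin n => u i = 0)).card * τ)
        * ∑ k ∈ Finset.range (l + 1),
            ((l : ℂ) * ((Fintype.card F : ℂ) - 1) - (Fintype.card F : ℂ) * k)
                ^ ((Finset.univ.filter (fun i : Fin n => u i ≠ 0)).card * τ)
              * (l.choose k : ℂ) * ((Fintype.card F : ℂ) - 1) ^ k := by
        rw [← Finset.mul_sum, weightFiberSum]

/-- Lemma 12 of the paper: for the ensemble of l×n sparse matrices over GF(q)
    generated by τ additions of a uniformly random nonzero element at a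
    uniformly random row in each column, the probability that Au = 0 depends
    on u only through its Hamming weight w and equals
    (1/q^l) Σ_{k=0}^{l} (1 − qk/((q−1)l))^{wτ} C(l,k) (q−1)^k. -/
theorem sparse_matrix_annihilation_probability
    {F : Type} [Field F] [Fintype F] [DecidableEq F]
    (l n τ : ℕ) (hl : 1 ≤ l) (u : Fin n → F) :
    (((Finset.univ.filter
        (fun s : Fin n → Fin τ → Fin l × {a : F // a ≠ 0} =>
          (sparseMat l n τ s).mulVec u = 0)).card : ℝ)
      / ((l : ℝ) * ((Fintype.card F : ℝ) - 1)) ^ (n * τ))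
    = (1 / (Fintype.card F : ℝ) ^ l) *
        ∑ k ∈ Finset.range (l + 1),
          (1 - (Fintype.card F : ℝ) * (k : ℝ)
              / (((Fintype.card F : ℝ) - 1) * (l : ℝ)))
            ^ ((Finset.univ.filter (fun i : Fin n => u i ≠ 0)).card * τ) *
          (l.choose k : ℝ) *
          ((Fintype.card F : ℝ) - 1) ^ k := by
  classical
  have hq2 : 2 ≤ Fintype.card F := Fintype.one_lt_card
  have hq2R : (2 : ℝ) ≤ (Fintype.card F : ℝ) := by exact_mod_cast hq2
  have hlR : (1 : ℝ) ≤ (l : ℝ) := by exact_mod_cast hl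
  set w := (Finset.univ.filter (fun i : Fin n => u i ≠ 0)).card with hwdef
  have hwn : w + (Finset.univ.filter (fun i : Fin n => u i = 0)).card = n := by
    have := Finset.card_filter_add_card_filter_not
      (s := (Finset.univ : Finset (Fin n))) (p := fun i => u i ≠ 0)
    simpa [not_not, Finset.card_univ] using this
  have hn0 : (Finset.univ.filter (fun i : Fin n => u i = 0)).card = n - w := by omega
  have hkey := key_complex l n τ u
  rw [hn0, ← hwdef] at hkey
  have hkeyR : ((Finset.univ.filter
        (fun s : Fin n → Fin τ → Fin l × {a : F // a ≠ 0} =>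
          (sparseMat l n τ s).mulVec u = 0)).card : ℝ) * (Fintype.card F : ℝ) ^ l
      = ((l : ℝ) * ((Fintype.card F : ℝ) - 1)) ^ ((n - w) * τ)
        * ∑ k ∈ Finset.range (l + 1),
            ((l : ℝ) * ((Fintype.card F : ℝ) - 1) - (Fintype.card F : ℝ) * k) ^ (w * τ)
              * (l.choose k : ℝ) * ((Fintype.card F : ℝ) - 1) ^ k := by
    apply Complex.ofReal_injective
    push_cast
    linear_combination hkey
  have hD0 : (l : ℝ) * ((Fintype.card F : ℝ) - 1) ≠ 0 := by
    apply mul_ne_zero <;> intro h <;> nlinarith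
  have hq0 : ((Fintype.card F : ℝ)) ^ l ≠ 0 := pow_ne_zero _ (by nlinarith)
  have hsummand : ∀ k ∈ Finset.range (l + 1),
      (1 - (Fintype.card F : ℝ) * (k : ℝ) / (((Fintype.card F : ℝ) - 1) * (l : ℝ))) ^ (w * τ) *
          (l.choose k : ℝ) * ((Fintype.card F : ℝ) - 1) ^ k
      = ((l : ℝ) * ((Fintype.card F : ℝ) - 1) - (Fintype.card F : ℝ) * k) ^ (w * τ)
          * (l.choose k : ℝ) * ((Fintype.card F : ℝ) - 1) ^ k
          / ((l : ℝ) * ((Fintype.card F : ℝ) - 1)) ^ (w * τ) := by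
    intro k _
    have hB0 : ((Fintype.card F : ℝ) - 1) * (l : ℝ) ≠ 0 := by
      apply mul_ne_zero <;> intro h <;> nlinarith
    have h1 : (1 - (Fintype.card F : ℝ) * (k : ℝ) / (((Fintype.card F : ℝ) - 1) * (l : ℝ)))
        = ((l : ℝ) * ((Fintype.card F : ℝ) - 1) - (Fintype.card F : ℝ) * k)
          / ((l : ℝ) * ((Fintype.card F : ℝ) - 1)) := by
      rw [one_sub_div hB0, mul_comm ((Fintype.card F : ℝ) - 1) (l : ℝ)]
    rw [h1, div_pow]
    ring
  rw [Finset.sum_congr rfl hsummand, ← Finset.sum_div]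
  rw [one_div, inv_mul_eq_div, div_div,
    div_eq_div_iff (pow_ne_zero _ hD0) (mul_ne_zero (pow_ne_zero _ hD0) hq0)]
  have hnτ : n * τ = (n - w) * τ + w * τ := by
    have h1 : w ≤ n := by omega
    have h2 : n - w + w = n := by omega
    calc n * τ = (n - w + w) * τ := by rw [h2]
    _ = (n - w) * τ + w * τ := by ring
  rw [hnτ, pow_add]
  linear_combination ((l : ℝ) * ((Fintype.card F : ℝ) - 1)) ^ (w * τ) * hkeyR
end

section
/- For the sparse-matrix ensemble over GF(q) with even column weight τ, the image set Im A := ⋃_A {Au : u ∈ GF(q)^n} (union over matrices A with positive probability) equals the set of even-weight vectors in GF(2)^l when q = 2, and equals all of GF(q)^l when q > 2. Consequently |Im A|/q^l = 1/2 if q = 2 and 1 if q > 2. -/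
open scoped Classical BigOperators

/-- The image set Im 𝒜 = ⋃_A { Au : u } of the sparse ensemble, as a Finset. -/
noncomputable def sparseIm {F : Type} [Field F] [Fintype F] [DecidableEq F]
    (l n τ : ℕ) : Finset (Fin l → F) :=
  Finset.univ.filter (fun c : Fin l → F =>
    ∃ (s : Fin n → Fin τ → Fin l × {a : F // a ≠ 0}) (u : Fin n → F),
      (sparseMat l n τ s).mulVec u = c)

set_option linter.unusedSectionVars false
set_option maxHeartbeats 1000000

section AuxSparse

variable {F : Type} [Field F] [Fintype F] [DecidableEq F]

noncomputable def mkCol {l : ℕ} (m : ℕ) (p q : Fin l × {a : F // a ≠ 0}) :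
    Fin (m + m) → Fin l × {a : F // a ≠ 0} :=
  fun t => Sum.elim
    (fun t1 : Fin m => if t1.val = 0 then p else (p.1, ⟨1, one_ne_zero⟩))
    (fun t1 : Fin m => if t1.val = 0 then q else (p.1, ⟨-1, neg_ne_zero.mpr one_ne_zero⟩))
    (finSumFinEquiv.symm t)

lemma sum_ite_head {m : ℕ} (hm : 0 < m) (A B : F) :
    ∑ t1 : Fin m, (if t1.val = 0 then A else B) = (A - B) + m • B := by
  have h : ∀ t1 : Fin m, (if t1.val = 0 then A else B)
      = (if t1 = ⟨0, hm⟩ then A - B else 0) + B := by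
    intro t1
    by_cases h : t1.val = 0
    · rw [if_pos h, if_pos (Fin.ext h)]; ring
    · rw [if_neg h, if_neg (fun hh => h (by rw [hh]))]; ring
  rw [Finset.sum_congr rfl (fun t1 _ => h t1), Finset.sum_add_distrib,
    Finset.sum_ite_eq', Finset.sum_const, if_pos (Finset.mem_univ _)]
  simp

lemma mkCol_spec {l : ℕ} (m : ℕ) (hm : 0 < m) (p q : Fin l × {a : F // a ≠ 0}) (j : Fin l) :
    ∑ t : Fin (m + m), (if (mkCol m p q t).1 = j then ((mkCol m p q t).2 : F) else 0)
      = (if p.1 = j then (p.2 : F) else 0) + (if q.1 = j then (q.2 : F) else 0) := by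
  rw [← Equiv.sum_comp finSumFinEquiv
    (fun t => if (mkCol m p q t).1 = j then ((mkCol m p q t).2 : F) else 0),
    Fintype.sum_sum_type]
  have e1 : ∀ t1 : Fin m,
      (if (mkCol m p q (finSumFinEquiv (Sum.inl t1))).1 = j
        then ((mkCol m p q (finSumFinEquiv (Sum.inl t1))).2 : F) else 0)
      = (if t1.val = 0 then (if p.1 = j then (p.2 : F) else 0)
          else (if p.1 = j then (1:F) else 0)) := by
    intro t1
    simp only [mkCol, Equiv.symm_apply_apply, Sum.elim_inl]
    by_cases h : t1.val = 0 <;> simp [h]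
  have e2 : ∀ t1 : Fin m,
      (if (mkCol m p q (finSumFinEquiv (Sum.inr t1))).1 = j
        then ((mkCol m p q (finSumFinEquiv (Sum.inr t1))).2 : F) else 0)
      = (if t1.val = 0 then (if q.1 = j then (q.2 : F) else 0)
          else (if p.1 = j then (-1:F) else 0)) := by
    intro t1
    simp only [mkCol, Equiv.symm_apply_apply, Sum.elim_inr]
    by_cases h : t1.val = 0 <;> simp [h]
  rw [Finset.sum_congr rfl (fun t1 _ => e1 t1), Finset.sum_congr rfl (fun t1 _ => e2 t1),
    sum_ite_head hm, sum_ite_head hm]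
  have : (if p.1 = j then (-1:F) else 0) = -(if p.1 = j then (1:F) else 0) := by
    by_cases h : p.1 = j <;> simp [h]
  rw [this, smul_neg]
  ring

lemma mem_sparseIm_of (l n τ : ℕ) (hl : 1 ≤ l) (hln : l ≤ n) (hτpos : 0 < τ)
    (hτ : Even τ) (c : Fin l → F) (x : F) (hx1 : x ≠ 0) (hx2 : (∑ j, c j) - x ≠ 0) :
    c ∈ sparseIm (F := F) l n τ := by
  classical
  obtain ⟨m, hm⟩ := hτ
  have hm0 : 0 < m := by omega
  set b : F := ∑ j, c j with hb
  set c' : ℕ → F := fun k => if h : k < l then c ⟨k, h⟩ else 0 with hc'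
  set d : ℕ → F := fun k => ∑ t ∈ Finset.range (k + 1), c' t with hd
  -- column pair data
  set pc : Fin n → (Fin l × {a : F // a ≠ 0}) × (Fin l × {a : F // a ≠ 0}) :=
    fun i =>
      if h : i.val < l - 1 then
        ((⟨i.val, by omega⟩, ⟨1, one_ne_zero⟩),
         (⟨i.val + 1, by omega⟩, ⟨-1, neg_ne_zero.mpr one_ne_zero⟩))
      else if i.val = l - 1 then
        ((⟨0, hl⟩, ⟨x, hx1⟩), (⟨0, hl⟩, ⟨b - x, hx2⟩))
      else
        ((⟨0, hl⟩, ⟨1, one_ne_zero⟩), (⟨0, hl⟩, ⟨-1, neg_ne_zero.mpr one_ne_zero⟩))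
    with hpc
  set s : Fin n → Fin τ → Fin l × {a : F // a ≠ 0} :=
    fun i t => mkCol m (pc i).1 (pc i).2 (finCongr hm t) with hs
  set u : Fin n → F :=
    fun i => if i.val < l - 1 then d i.val - b else if i.val = l - 1 then 1 else 0 with hu
  have hA : ∀ (j : Fin l) (i : Fin n), sparseMat l n τ s j i
      = (if (pc i).1.1 = j then ((pc i).1.2 : F) else 0)
        + (if (pc i).2.1 = j then ((pc i).2.2 : F) else 0) := by
    intro j i
    have key := mkCol_spec (F := F) m hm0 (pc i).1 (pc i).2 j
    have := Equiv.sum_comp (finCongr hm)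
      (fun t => if (mkCol m (pc i).1 (pc i).2 t).1 = j
        then ((mkCol m (pc i).1 (pc i).2 t).2 : F) else 0)
    exact this.trans key
  refine Finset.mem_filter.mpr ⟨Finset.mem_univ _, s, u, ?_⟩
  funext j
  show ∑ i : Fin n, sparseMat l n τ s j i * u i = c j
  -- nat-indexed summand
  set h : ℕ → F := fun k =>
    if hk : k < l - 1 then
      ((if (⟨k, by omega⟩ : Fin l) = j then (1:F) else 0)
        + (if (⟨k + 1, by omega⟩ : Fin l) = j then (-1:F) else 0)) * (d k - b)
    else if k = l - 1 then
      (if (⟨0, hl⟩ : Fin l) = j then b else 0)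
    else 0
    with hhdef
  have hterm : ∀ i : Fin n, sparseMat l n τ s j i * u i = h i.val := by
    intro i
    rw [hA j i]
    by_cases h1 : i.val < l - 1
    · simp only [hpc, hu, hhdef, dif_pos h1, if_pos h1]
    · by_cases h2 : i.val = l - 1
      · simp only [hpc, hu, hhdef, dif_neg h1, if_neg h1, if_pos h2, mul_one]
        by_cases h0 : (⟨0, hl⟩ : Fin l) = j <;> simp [h0] <;> ring
      · simp only [hpc, hu, hhdef, dif_neg h1, if_neg h1, if_neg h2, mul_zero]
  rw [Finset.sum_congr rfl (fun i _ => hterm i), Fin.sum_univ_eq_sum_range]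
  have hsub : ∑ k ∈ Finset.range l, h k = ∑ k ∈ Finset.range n, h k := by
    apply Finset.sum_subset (Finset.range_subset_range.mpr hln)
    intro k hk hk2
    simp only [Finset.mem_range] at hk hk2
    simp only [hhdef]
    rw [dif_neg (by omega), if_neg (by omega)]
  rw [← hsub]
  have hl1 : l = (l - 1) + 1 := by omega
  rw [hl1, Finset.sum_range_succ]
  -- simplify tail term
  have htail : h (l - 1) = (if (⟨0, hl⟩ : Fin l) = j then b else 0) := by
    simp only [hhdef]; rw [dif_neg (by omega)]; simp
  -- simplify main sum terms
  have hmain : ∀ k ∈ Finset.range (l - 1), h k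
      = (if k = j.val then d k - b else 0) + (if k + 1 = j.val then -(d k - b) else 0) := by
    intro k hk
    simp only [Finset.mem_range] at hk
    simp only [hhdef, dif_pos hk]
    have e1 : ((⟨k, by omega⟩ : Fin l) = j) ↔ k = j.val := by
      rw [Fin.ext_iff]
    have e2 : ((⟨k + 1, by omega⟩ : Fin l) = j) ↔ k + 1 = j.val := by
      rw [Fin.ext_iff]
    by_cases a1 : k = j.val <;> by_cases a2 : k + 1 = j.val
    · omega
    · rw [if_pos (e1.mpr a1), if_neg (fun hh => a2 (e2.mp hh)), if_pos a1, if_neg a2]; ring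
    · rw [if_neg (fun hh => a1 (e1.mp hh)), if_pos (e2.mpr a2), if_neg a1, if_pos a2]; ring
    · rw [if_neg (fun hh => a1 (e1.mp hh)), if_neg (fun hh => a2 (e2.mp hh)),
        if_neg a1, if_neg a2]; ring
  rw [Finset.sum_congr rfl hmain, Finset.sum_add_distrib, Finset.sum_ite_eq', htail]
  -- facts about d
  have hdstep : ∀ k, 1 ≤ k → d k = d (k - 1) + c' k := by
    intro k hk
    have e : k + 1 = (k - 1) + 1 + 1 := by omega
    show ∑ t ∈ Finset.range (k + 1), c' t = (∑ t ∈ Finset.range ((k - 1) + 1), c' t) + c' k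
    rw [e, Finset.sum_range_succ]
    have e2 : (k - 1) + 1 = k := by omega
    rw [e2]
  have hdlast : d (l - 1) = b := by
    show ∑ t ∈ Finset.range (l - 1 + 1), c' t = b
    rw [← hl1, ← Fin.sum_univ_eq_sum_range c' l, hb]
    apply Finset.sum_congr rfl
    intro i _
    simp only [hc']
    rw [dif_pos i.isLt]
  have hcj : c' j.val = c j := by
    simp only [hc']; rw [dif_pos j.isLt]
  have hd0 : d 0 = c' 0 := by simp [hd]
  have hjl : j.val < l := j.isLt
  have h0j : ((⟨0, hl⟩ : Fin l) = j) ↔ 0 = j.val := by rw [Fin.ext_iff]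
  -- second sum
  by_cases hj0 : j.val = 0
  · have hsecond : ∑ k ∈ Finset.range (l - 1), (if k + 1 = j.val then -(d k - b) else 0) = 0 := by
      apply Finset.sum_eq_zero
      intro k _
      rw [if_neg (by omega)]
    rw [hsecond, if_pos (h0j.mpr hj0.symm)]
    by_cases hll : (0:ℕ) < l - 1
    · rw [if_pos (Finset.mem_range.mpr (by omega))]
      have : d j.val = c j := by rw [hj0, hd0, ← hj0, hcj]
      rw [this]; ring
    · -- l = 1
      rw [if_neg (by simp [Finset.mem_range]; omega)]
      have : b = c j := by
        rw [← hdlast]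
        have : l - 1 = 0 := by omega
        rw [this, hd0, ← hj0, hcj]
      rw [this]; ring
  · have hsecond : ∑ k ∈ Finset.range (l - 1), (if k + 1 = j.val then -(d k - b) else 0)
        = ∑ k ∈ Finset.range (l - 1), (if k = j.val - 1 then -(d k - b) else 0) := by
      apply Finset.sum_congr rfl
      intro k _
      congr 1
      simp only [eq_iff_iff]
      omega
    rw [hsecond, Finset.sum_ite_eq', if_neg (fun hh => hj0 ((h0j.mp hh).symm))]
    have hstep : d j.val = d (j.val - 1) + c j := by
      rw [hdstep j.val (by omega), hcj]
    by_cases hjlt : j.val < l - 1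
    · rw [if_pos (Finset.mem_range.mpr hjlt), if_pos (Finset.mem_range.mpr (by omega))]
      rw [hstep]; ring
    · have hje : j.val = l - 1 := by omega
      rw [if_neg (by simp [Finset.mem_range]; omega),
        if_pos (Finset.mem_range.mpr (by omega))]
      have : d (j.val - 1) = b - c j := by
        have := hstep
        rw [hje, hdlast] at this
        rw [hje]
        linear_combination -this
      rw [this]; ring

lemma two_eq_zero_of_card (h2 : Fintype.card F = 2) : (2 : F) = 0 := by
  have h := Nat.cast_card_eq_zero F
  rw [h2] at h
  exact_mod_cast h

lemma eq_one_of_ne_zero_of_card (h2 : Fintype.card F = 2) {x : F} (hx : x ≠ 0) : x = 1 := by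
  have hu : Fintype.card Fˣ = 1 := by rw [Fintype.card_units, h2]
  have hs := Fintype.card_le_one_iff.mp (le_of_eq hu)
  have := hs (Units.mk0 x hx) 1
  calc x = ((Units.mk0 x hx : Fˣ) : F) := rfl
    _ = ((1 : Fˣ) : F) := by rw [this]
    _ = 1 := Units.val_one

lemma natCast_eq_zero_iff_even_of_card (h2 : Fintype.card F = 2) (k : ℕ) :
    ((k : F) = 0) ↔ Even k := by
  have h20 := two_eq_zero_of_card h2
  have hk : (k : F) = ((k % 2 : ℕ) : F) := by
    conv_lhs => rw [← Nat.mod_add_div k 2]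
    push_cast
    rw [h20]
    ring
  rw [hk, Nat.even_iff]
  rcases Nat.mod_two_eq_zero_or_one k with h | h <;> rw [h] <;> simp

lemma sumzero_iff_even_of_card (h2 : Fintype.card F = 2) {l : ℕ} (c : Fin l → F) :
    (∑ j, c j = 0) ↔ Even (Finset.univ.filter (fun j : Fin l => c j ≠ 0)).card := by
  have h1 : ∑ j ∈ Finset.univ.filter (fun j : Fin l => c j ≠ 0), c j = ∑ j, c j :=
    Finset.sum_filter_ne_zero Finset.univ
  have h2' : ∑ j ∈ Finset.univ.filter (fun j : Fin l => c j ≠ 0), c j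
      = ((Finset.univ.filter (fun j : Fin l => c j ≠ 0)).card : F) := by
    rw [Finset.sum_congr rfl (fun j hj => eq_one_of_ne_zero_of_card h2
      (Finset.mem_filter.mp hj).2), Finset.sum_const, nsmul_eq_mul, mul_one]
  rw [← h1, h2', natCast_eq_zero_iff_even_of_card h2]

lemma sum_mulVec_eq_zero (h2 : Fintype.card F = 2) {l n τ : ℕ} (hτ : Even τ)
    (s : Fin n → Fin τ → Fin l × {a : F // a ≠ 0}) (u : Fin n → F) :
    ∑ j, (sparseMat l n τ s).mulVec u j = 0 := by
  have hmv : ∀ j, (sparseMat l n τ s).mulVec u j = ∑ i, sparseMat l n τ s j i * u i :=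
    fun j => rfl
  calc ∑ j, (sparseMat l n τ s).mulVec u j
      = ∑ j, ∑ i, sparseMat l n τ s j i * u i := Finset.sum_congr rfl (fun j _ => hmv j)
    _ = ∑ i, ∑ j, sparseMat l n τ s j i * u i := Finset.sum_comm
    _ = ∑ i : Fin n, (∑ j, sparseMat l n τ s j i) * u i := by
        refine Finset.sum_congr rfl (fun i _ => ?_)
        rw [Finset.sum_mul]
    _ = 0 := by
        apply Finset.sum_eq_zero
        intro i _
        have hcol : ∑ j, sparseMat l n τ s j i = 0 := by
          unfold sparseMat
          rw [Finset.sum_comm]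
          have hone : ∀ t ∈ (Finset.univ : Finset (Fin τ)),
              (∑ j, if (s i t).1 = j then ((s i t).2 : F) else 0) = 1 := by
            intro t _
            rw [Finset.sum_ite_eq, if_pos (Finset.mem_univ _)]
            exact eq_one_of_ne_zero_of_card h2 (s i t).2.2
          rw [Finset.sum_congr rfl hone, Finset.sum_const, Finset.card_univ,
            Fintype.card_fin, nsmul_eq_mul, mul_one]
          exact (natCast_eq_zero_iff_even_of_card h2 τ).mpr hτ
        rw [hcol, zero_mul]

lemma card_sumzero (l : ℕ) (hl : 1 ≤ l) :
    (Finset.univ.filter (fun c : Fin l → F => ∑ j, c j = 0)).card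
      = Fintype.card F ^ (l - 1) := by
  obtain ⟨m, rfl⟩ : ∃ m, l = m + 1 := ⟨l - 1, by omega⟩
  have e : {c : Fin (m + 1) → F // ∑ j, c j = 0} ≃ (Fin m → F) :=
    { toFun := fun c => Fin.tail c.1
      invFun := fun v => ⟨Fin.cons (-∑ i, v i) v, by
        rw [Fin.sum_cons]; ring⟩
      left_inv := by
        intro c
        apply Subtype.ext
        have h := c.2
        rw [Fin.sum_univ_succ] at h
        have hv : -∑ i, Fin.tail c.1 i = c.1 0 := by
          have : ∑ i, Fin.tail c.1 i = ∑ i : Fin m, c.1 i.succ := rfl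
          rw [this]
          linear_combination -h
        show Fin.cons (-∑ i, Fin.tail c.1 i) (Fin.tail c.1) = c.1
        rw [hv, Fin.cons_self_tail]
      right_inv := by
        intro v
        simp [Fin.tail_cons] }
  rw [← Fintype.card_subtype, Fintype.card_congr e, Fintype.card_fun, Fintype.card_fin]
  simp


end AuxSparse

/-- Lemma 13 of the paper: for the sparse ensemble with even column weight τ,
    Im 𝒜 is the set of even-weight vectors when q = 2 and all of GF(q)^l when
    q > 2; consequently |Im 𝒜|/q^l equals 1/2 resp. 1. -/
theorem sparse_matrix_image
    {F : Type} [Field F] [Fintype F] [DecidableEq F]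
    (l n τ : ℕ) (hl : 1 ≤ l) (hln : l ≤ n) (hτpos : 0 < τ) (hτ : Even τ) :
    (Fintype.card F = 2 →
      sparseIm (F := F) l n τ
        = Finset.univ.filter (fun c : Fin l → F =>
            Even (Finset.univ.filter (fun j : Fin l => c j ≠ 0)).card)
      ∧ ((sparseIm (F := F) l n τ).card : ℝ) / (Fintype.card F : ℝ) ^ l = 1 / 2)
    ∧ (2 < Fintype.card F →
      sparseIm (F := F) l n τ = Finset.univ
      ∧ ((sparseIm (F := F) l n τ).card : ℝ) / (Fintype.card F : ℝ) ^ l = 1) := by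
  constructor
  · intro h2
    have hset : sparseIm (F := F) l n τ
        = Finset.univ.filter (fun c : Fin l → F =>
            Even (Finset.univ.filter (fun j : Fin l => c j ≠ 0)).card) := by
      ext c
      simp only [sparseIm, Finset.mem_filter, Finset.mem_univ, true_and]
      constructor
      · rintro ⟨s, u, rfl⟩
        exact (sumzero_iff_even_of_card h2 _).mp (sum_mulVec_eq_zero h2 hτ s u)
      · intro hev
        have hsz : ∑ j, c j = 0 := (sumzero_iff_even_of_card h2 c).mpr hev
        have := mem_sparseIm_of l n τ hl hln hτpos hτ c 1 one_ne_zero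
          (by rw [hsz]; simp)
        simpa [sparseIm, Finset.mem_filter] using this
    refine ⟨hset, ?_⟩
    have hszset : sparseIm (F := F) l n τ
        = Finset.univ.filter (fun c : Fin l → F => ∑ j, c j = 0) := by
      rw [hset]
      ext c
      simp only [Finset.mem_filter, Finset.mem_univ, true_and]
      exact (sumzero_iff_even_of_card h2 c).symm
    rw [hszset, card_sumzero l hl, h2]
    have hl1 : l = (l - 1) + 1 := by omega
    rw [hl1]
    push_cast
    rw [pow_succ]
    have : (2 : ℝ) ^ (l - 1) ≠ 0 := by positivity
    field_simp
  · intro h3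
    have hall : sparseIm (F := F) l n τ = Finset.univ := by
      apply Finset.eq_univ_of_forall
      intro c
      have hx : ∃ x : F, x ≠ 0 ∧ (∑ j, c j) - x ≠ 0 := by
        by_contra hcon
        push_neg at hcon
        have hsub : (Finset.univ : Finset F) ⊆ {0, ∑ j, c j} := by
          intro y _
          rcases eq_or_ne y 0 with hy | hy
          · simp [hy]
          · have h := hcon y hy
            have hy2 : y = ∑ j, c j := (sub_eq_zero.mp h).symm
            simp [hy2]
        have hc1 := Finset.card_le_card hsub
        have hc2 : ({0, ∑ j, c j} : Finset F).card ≤ 2 :=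
          (Finset.card_insert_le _ _).trans (by simp)
        rw [Finset.card_univ] at hc1
        omega
      obtain ⟨x, hx1, hx2⟩ := hx
      exact mem_sparseIm_of l n τ hl hln hτpos hτ c x hx1 hx2
    refine ⟨hall, ?_⟩
    rw [hall, Finset.card_univ, Fintype.card_fun, Fintype.card_fin]
    have hq : (0:ℝ) < (Fintype.card F : ℝ) := by
      have := Fintype.card_pos (α := F)
      positivity
    push_cast
    rw [div_self (by positivity)]
end
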